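/- arXiv:1503.02977 — 5 statements merged into one kernel-verified Lean document; each statement's English description precedes it below -/
import Mathlib

section
/- For every n ≥ 1 and every s = (s₁,…,sₙ) ∈ ℂⁿ, the multiple series ∑_{m₁>m₂>⋯>mₙ>0} ∏_{i=1}^n m_i^{-s_i} (sum over strictly decreasing n-tuples of positive integers) converges absolutely if and only if ∑_{j=1}^k Re(s_j) > k for every k = 1,…,n; that is, the family (m₁,…,mₙ) ↦ ∏ m_i^{-s_i} indexed by {(m₁,…,mₙ) ∈ ℕⁿ : m₁ > m₂ > ⋯ > mₙ > 0} is summable precisely on this domain. -/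
open Finset Real

lemma rpow_fsum {ι : Type*} (x : ℝ) (hx : 0 < x) (s : Finset ι) (f : ι → ℝ) :
    x ^ (∑ i ∈ s, f i) = ∏ i ∈ s, x ^ f i := by
  classical
  induction s using Finset.cons_induction with
  | empty => simp
  | cons a s ha ih => rw [Finset.sum_cons, Finset.prod_cons, Real.rpow_add hx, ih]

lemma abel_compare (N : ℕ) (a b L : ℕ → ℝ)
    (hpre : ∀ k, k < N → ∑ j ∈ range (k+1), b j ≤ ∑ j ∈ range (k+1), a j)
    (hL : ∀ i, i + 1 < N → L (i+1) ≤ L i) (hL0 : ∀ i, i < N → 0 ≤ L i) :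
    ∑ i ∈ range N, b i * L i ≤ ∑ i ∈ range N, a i * L i := by
  rcases Nat.eq_zero_or_pos N with h0 | hN
  · simp [h0]
  have key : 0 ≤ ∑ i ∈ range N, L i • (a i - b i) := by
    rw [Finset.sum_range_by_parts (fun i => L i) (fun i => a i - b i) N]
    have h1 : 0 ≤ L (N-1) • ∑ i ∈ range N, (a i - b i) := by
      apply smul_nonneg
      · exact hL0 _ (Nat.sub_lt hN one_pos)
      · rw [Finset.sum_sub_distrib, sub_nonneg]
        have := hpre (N-1) (Nat.sub_lt hN one_pos)
        rw [show N - 1 + 1 = N by omega] at this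
        exact this
    have h2 : ∑ i ∈ range (N-1), (L (i+1) - L i) • ∑ j ∈ range (i+1), (a j - b j) ≤ 0 := by
      apply Finset.sum_nonpos
      intro i hi
      rw [Finset.mem_range] at hi
      have hiN : i + 1 < N := by omega
      apply smul_nonpos_of_nonpos_of_nonneg
      · linarith [hL i hiN]
      · rw [Finset.sum_sub_distrib, sub_nonneg]
        exact hpre i (by omega)
    linarith
  simp only [smul_eq_mul] at key
  have : ∑ i ∈ range N, L i * (a i - b i)
      = ∑ i ∈ range N, a i * L i - ∑ i ∈ range N, b i * L i := by
    rw [← Finset.sum_sub_distrib]; congr 1; ext i; ring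
  linarith [key, this ▸ key]

lemma sum_Iic_eq_range {n : ℕ} (σ : Fin n → ℝ) (k : Fin n) :
    ∑ j ∈ Finset.Iic k, σ j
      = ∑ j ∈ range (k.val+1), (if h : j < n then σ ⟨j, h⟩ else 0) := by
  have h1 : Finset.Iic k = Finset.univ.filter (· ≤ k) := by
    ext j; simp
  rw [h1, Finset.sum_filter]
  have h2 : ∀ i : Fin n, (if i ≤ k then σ i else 0)
      = (fun j => if h : j < n then (if j ≤ k.val then σ ⟨j, h⟩ else 0) else 0) i.val := by
    intro i
    simp only [i.isLt, dif_pos, Fin.eta]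
    congr 1
  calc ∑ i : Fin n, (if i ≤ k then σ i else 0)
      = ∑ j ∈ range n, (if h : j < n then (if j ≤ k.val then σ ⟨j, h⟩ else 0) else 0) := by
        rw [← Fin.sum_univ_eq_sum_range]
        exact Finset.sum_congr rfl (fun i _ => h2 i)
    _ = ∑ j ∈ range n, (if j ≤ k.val then (if h : j < n then σ ⟨j, h⟩ else 0) else 0) := by
        apply Finset.sum_congr rfl; intro j hj
        rw [Finset.mem_range] at hj
        simp only [hj, dif_pos]
    _ = ∑ j ∈ (range n).filter (· ≤ k.val), (if h : j < n then σ ⟨j, h⟩ else 0) := by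
        rw [Finset.sum_filter]
    _ = ∑ j ∈ range (k.val+1), (if h : j < n then σ ⟨j, h⟩ else 0) := by
        congr 1
        ext j
        simp only [Finset.mem_filter, Finset.mem_range]
        have := k.isLt
        omega

lemma prod_rpow_le {n : ℕ} (σ τ : Fin n → ℝ) (m : Fin n → ℕ) (hm : StrictAnti m)
    (hpos : ∀ i, 0 < m i) (h : ∀ k, ∑ j ∈ Finset.Iic k, τ j ≤ ∑ j ∈ Finset.Iic k, σ j) :
    ∏ i, (m i : ℝ) ^ (-σ i) ≤ ∏ i, (m i : ℝ) ^ (-τ i) := by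
  have hm0 : ∀ i : Fin n, (0:ℝ) < m i := fun i => by exact_mod_cast hpos i
  have hm1 : ∀ i : Fin n, (1:ℝ) ≤ m i := fun i => by exact_mod_cast hpos i
  have e : ∀ ρ : Fin n → ℝ, ∏ i, (m i : ℝ) ^ (-ρ i)
      = Real.exp (∑ i, Real.log (m i) * (-ρ i)) := by
    intro ρ
    rw [Real.exp_sum]
    exact Finset.prod_congr rfl fun i _ => Real.rpow_def_of_pos (hm0 i) _
  rw [e σ, e τ, Real.exp_le_exp]
  have key : ∑ i, τ i * Real.log (m i) ≤ ∑ i, σ i * Real.log (m i) := by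
    set a : ℕ → ℝ := fun j => if h : j < n then σ ⟨j, h⟩ else 0 with ha
    set b : ℕ → ℝ := fun j => if h : j < n then τ ⟨j, h⟩ else 0 with hb
    set L : ℕ → ℝ := fun j => if h : j < n then Real.log (m ⟨j, h⟩) else 0 with hL
    have conv : ∀ ρ : Fin n → ℝ, (∀ j, (if h : j < n then ρ ⟨j,h⟩ else 0) = (if h : j < n then ρ ⟨j,h⟩ else 0)) → True := fun _ _ => trivial
    have cσ : ∑ i, σ i * Real.log (m i) = ∑ j ∈ range n, a j * L j := by
      rw [← Fin.sum_univ_eq_sum_range (fun j => a j * L j) n]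
      apply Finset.sum_congr rfl
      intro i _
      simp only [ha, hb, hL, i.isLt, dif_pos, Fin.eta]
    have cτ : ∑ i, τ i * Real.log (m i) = ∑ j ∈ range n, b j * L j := by
      rw [← Fin.sum_univ_eq_sum_range (fun j => b j * L j) n]
      apply Finset.sum_congr rfl
      intro i _
      simp only [ha, hb, hL, i.isLt, dif_pos, Fin.eta]
    rw [cσ, cτ]
    apply abel_compare
    · intro k hk
      have := h ⟨k, hk⟩
      rw [sum_Iic_eq_range σ ⟨k, hk⟩, sum_Iic_eq_range τ ⟨k, hk⟩] at this
      exact this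
    · intro i hi
      simp only [hL, hi, dif_pos, Nat.lt_of_succ_lt hi]
      apply Real.log_le_log (hm0 _)
      exact_mod_cast le_of_lt (hm (by simp [Fin.lt_def] : (⟨i, Nat.lt_of_succ_lt hi⟩ : Fin n) < ⟨i+1, hi⟩))
    · intro i hi
      simp only [hL, hi, dif_pos]
      exact Real.log_nonneg (hm1 _)
  calc ∑ i, Real.log (m i) * (-σ i) = -∑ i, σ i * Real.log (m i) := by
        rw [← Finset.sum_neg_distrib]; exact Finset.sum_congr rfl fun i _ => by ring
    _ ≤ -∑ i, τ i * Real.log (m i) := by linarith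
    _ = ∑ i, Real.log (m i) * (-τ i) := by
        rw [← Finset.sum_neg_distrib]; exact Finset.sum_congr rfl fun i _ => by ring

lemma sum_Iic_const_ite {n : ℕ} (hn : 1 ≤ n) (ε : ℝ) (k : Fin n) :
    ∑ j ∈ Finset.Iic k, (if j = (⟨0, hn⟩ : Fin n) then 1 + ε else 1)
      = (k : ℕ) + 1 + ε := by
  have hz : (⟨0, hn⟩ : Fin n) ∈ Finset.Iic k := by
    rw [Finset.mem_Iic]; exact Fin.mk_le_of_le_val (Nat.zero_le _)
  rw [← Finset.add_sum_erase _ _ hz, if_pos rfl]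
  have h2 : ∀ j ∈ (Finset.Iic k).erase ⟨0, hn⟩,
      (if j = (⟨0, hn⟩ : Fin n) then (1:ℝ) + ε else 1) = 1 := by
    intro j hj
    rw [if_neg (Finset.ne_of_mem_erase hj)]
  rw [Finset.sum_congr rfl h2, Finset.sum_const, nsmul_eq_mul, mul_one,
    Finset.card_erase_of_mem hz, Fin.card_Iic]
  push_cast [Nat.cast_sub (by have := k.isLt; omega : 1 ≤ (k:ℕ) + 1)]
  ring

lemma sufficiency {n : ℕ} (hn : 1 ≤ n) (σ : Fin n → ℝ)
    (hσ : ∀ k : Fin n, ((k : ℕ) + 1 : ℝ) < ∑ j ∈ Finset.Iic k, σ j) :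
    Summable (fun m : {f : Fin n → ℕ // StrictAnti f ∧ ∀ i, 0 < f i} =>
      ∏ i, ((m.1 i : ℝ) ^ (-σ i))) := by
  classical
  set z : Fin n := ⟨0, hn⟩ with hz
  have hne : (Finset.univ : Finset (Fin n)).Nonempty := ⟨z, Finset.mem_univ z⟩
  set ε : ℝ := Finset.univ.inf' hne (fun k : Fin n => ∑ j ∈ Finset.Iic k, σ j - ((k:ℕ) + 1))
    with hεdef
  have hε : 0 < ε := by
    rw [hεdef, Finset.lt_inf'_iff]
    intro k _
    linarith [hσ k]
  have hεk : ∀ k : Fin n, ((k:ℕ) + 1 : ℝ) + ε ≤ ∑ j ∈ Finset.Iic k, σ j := by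
    intro k
    have := Finset.inf'_le (fun k : Fin n => ∑ j ∈ Finset.Iic k, σ j - ((k:ℕ) + 1))
      (Finset.mem_univ k)
    rw [← hεdef] at this
    linarith
  set τ : Fin n → ℝ := fun i => if i = z then 1 + ε else 1 with hτdef
  set δ : ℝ := ε / (2 * n) with hδdef
  have hδ : 0 < δ := by
    apply div_pos hε
    positivity
  have hZsum : Summable (fun x : ℕ => (x:ℝ) ^ (-(1+δ))) :=
    Real.summable_nat_rpow.2 (by linarith)
  set Z : ℝ := ∑' x : ℕ, (x:ℝ) ^ (-(1+δ)) with hZdef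
  have hZ0 : 0 ≤ Z := tsum_nonneg (fun x => Real.rpow_nonneg (Nat.cast_nonneg x) _)
  set g : Fin n → ℕ → ℕ → ℝ := fun i M x =>
    if i = z then (if x = M then (M:ℝ) ^ (-(1+ε)) else 0)
    else (if 1 ≤ x ∧ x ≤ M then (x:ℝ) ^ (-(1:ℝ)) else 0) with hgdef
  have hgz : ∀ M x, g z M x = if x = M then (M:ℝ) ^ (-(1+ε)) else 0 := by
    intro M x
    simp only [hgdef]
    simp
  have hgne : ∀ i, i ≠ z → ∀ M x, g i M x = if 1 ≤ x ∧ x ≤ M then (x:ℝ) ^ (-(1:ℝ)) else 0 := by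
    intro i hi M x
    simp only [hgdef]
    rw [if_neg hi]
  have hg0 : ∀ i M x, 0 ≤ g i M x := by
    intro i M x
    by_cases hiz : i = z
    · subst hiz; rw [hgz]; split_ifs <;> positivity
    · rw [hgne i hiz]; split_ifs <;> positivity
  set Q : ℕ × (Fin n → ℕ) → ℝ := fun p => ∏ i, g i p.1 (p.2 i) with hQdef
  have hQ0 : ∀ p, 0 ≤ Q p := fun p => Finset.prod_nonneg (fun i _ => hg0 i p.1 (p.2 i))
  -- zero off a finite set, in each slice
  have hzero : ∀ M : ℕ, ∀ f ∉ Fintype.piFinset (fun _ : Fin n => Finset.range (M+1)),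
      Q (M, f) = 0 := by
    intro M f hf
    rw [Fintype.mem_piFinset] at hf
    push_neg at hf
    obtain ⟨i, hi⟩ := hf
    rw [Finset.mem_range, not_lt] at hi
    apply Finset.prod_eq_zero (Finset.mem_univ i)
    show g i M (f i) = 0
    by_cases hiz : i = z
    · subst hiz
      rw [hgz, if_neg (by omega)]
    · rw [hgne i hiz, if_neg (by omega)]
  -- value of slice sums
  have hslice_le : ∀ M : ℕ, ∑' f : Fin n → ℕ, Q (M, f) ≤ Z ^ (n-1) * (M:ℝ) ^ (-(1+ε/2)) := by
    intro M
    rw [tsum_eq_sum (hzero M)]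
    rcases Nat.eq_zero_or_pos M with hM0 | hM1
    · subst hM0
      have : ∀ f ∈ Fintype.piFinset (fun _ : Fin n => Finset.range 1), Q (0, f) = 0 := by
        intro f _
        apply Finset.prod_eq_zero (Finset.mem_univ z)
        show g z 0 (f z) = 0
        rw [hgz]
        split_ifs
        · rw [Nat.cast_zero, Real.zero_rpow (by linarith)]
        · rfl
      rw [Finset.sum_congr rfl this, Finset.sum_const, smul_zero]
      positivity
    have hMR : (1:ℝ) ≤ (M:ℝ) := by exact_mod_cast hM1
    simp only [hQdef]
    rw [← Finset.prod_univ_sum]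
    have hfactor_z : ∑ x ∈ Finset.range (M+1), g z M x = (M:ℝ) ^ (-(1+ε)) := by
      rw [Finset.sum_congr rfl (fun x _ => hgz M x),
        Finset.sum_ite_eq' (Finset.range (M+1)) M (fun _ => (M:ℝ) ^ (-(1+ε))),
        if_pos (Finset.self_mem_range_succ M)]
    have hfactor_ne : ∀ i : Fin n, i ≠ z →
        ∑ x ∈ Finset.range (M+1), g i M x ≤ (M:ℝ) ^ δ * Z := by
      intro i hi
      have step : ∀ x ∈ Finset.range (M+1), g i M x ≤ (M:ℝ) ^ δ * (x:ℝ) ^ (-(1+δ)) := by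
        intro x hx
        rw [hgne i hi]
        split_ifs with h
        · have hx1 : (1:ℝ) ≤ (x:ℝ) := by exact_mod_cast h.1
          have hxM : (x:ℝ) ≤ (M:ℝ) := by exact_mod_cast h.2
          have e1 : (x:ℝ) ^ (-(1:ℝ)) = (x:ℝ) ^ δ * (x:ℝ) ^ (-(1+δ)) := by
            rw [← Real.rpow_add (by linarith)]
            ring_nf
          rw [e1]
          apply mul_le_mul_of_nonneg_right
          · exact Real.rpow_le_rpow (by linarith) hxM hδ.le
          · positivity
        · positivity
      calc ∑ x ∈ Finset.range (M+1), g i M x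
          ≤ ∑ x ∈ Finset.range (M+1), (M:ℝ) ^ δ * (x:ℝ) ^ (-(1+δ)) :=
            Finset.sum_le_sum step
        _ = (M:ℝ) ^ δ * ∑ x ∈ Finset.range (M+1), (x:ℝ) ^ (-(1+δ)) := by
            rw [Finset.mul_sum]
        _ ≤ (M:ℝ) ^ δ * Z := by
            apply mul_le_mul_of_nonneg_left _ (by positivity)
            exact Summable.sum_le_tsum _ (fun x _ => Real.rpow_nonneg (Nat.cast_nonneg x) _) hZsum
    calc ∏ i, ∑ x ∈ Finset.range (M+1), g i M x
        = (∑ x ∈ Finset.range (M+1), g z M x)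
          * ∏ i ∈ Finset.univ.erase z, ∑ x ∈ Finset.range (M+1), g i M x := by
          exact (Finset.mul_prod_erase Finset.univ _ (Finset.mem_univ z)).symm
      _ ≤ (M:ℝ) ^ (-(1+ε)) * ((M:ℝ) ^ δ * Z) ^ (n-1) := by
          rw [hfactor_z]
          apply mul_le_mul_of_nonneg_left _ (by positivity)
          have : ((M:ℝ) ^ δ * Z) ^ (n-1)
              = ∏ _i ∈ Finset.univ.erase z, ((M:ℝ) ^ δ * Z) := by
            rw [Finset.prod_const, Finset.card_erase_of_mem (Finset.mem_univ z),
              Finset.card_univ, Fintype.card_fin]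
          rw [this]
          apply Finset.prod_le_prod
          · intro i _
            exact Finset.sum_nonneg (fun x _ => hg0 i M x)
          · intro i hi
            exact hfactor_ne i (Finset.ne_of_mem_erase hi)
      _ ≤ Z ^ (n-1) * (M:ℝ) ^ (-(1+ε/2)) := by
          rw [mul_pow, ← Real.rpow_natCast ((M:ℝ) ^ δ) (n-1), ← Real.rpow_mul (by positivity)]
          have e2 : (M:ℝ) ^ (-(1+ε)) * ((M:ℝ) ^ (δ * (n-1:ℕ)) * Z ^ (n-1))
              = Z ^ (n-1) * ((M:ℝ) ^ (-(1+ε)) * (M:ℝ) ^ (δ * (n-1:ℕ))) := by ring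
          rw [e2]
          apply mul_le_mul_of_nonneg_left _ (by positivity)
          rw [← Real.rpow_add (by linarith : (0:ℝ) < (M:ℝ))]
          apply Real.rpow_le_rpow_of_exponent_le hMR
          have hcast : ((n-1:ℕ):ℝ) ≤ (n:ℝ) := Nat.cast_le.2 (Nat.sub_le n 1)
          have : δ * ((n-1:ℕ):ℝ) ≤ δ * n := by
            apply mul_le_mul_of_nonneg_left hcast hδ.le
          have hδn : δ * n = ε / 2 := by
            rw [hδdef]
            field_simp
          linarith
  have hQsum : Summable Q := by
    rw [summable_prod_of_nonneg hQ0]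
    constructor
    · intro M
      exact summable_of_ne_finset_zero (hzero M)
    · apply Summable.of_nonneg_of_le
        (fun M => tsum_nonneg (fun f => hQ0 (M, f))) hslice_le
      exact (Real.summable_nat_rpow.2 (by linarith)).mul_left _
  -- now compare
  have hemb : Function.Injective
      (fun m : {f : Fin n → ℕ // StrictAnti f ∧ ∀ i, 0 < f i} => ((m.1 z, m.1) : ℕ × (Fin n → ℕ))) := by
    intro m m' h
    rw [Prod.mk.injEq] at h
    exact Subtype.ext h.2
  apply Summable.of_nonneg_of_le
    (fun m => Finset.prod_nonneg (fun i _ => Real.rpow_nonneg (Nat.cast_nonneg _) _))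
    (fun m => ?_) (hQsum.comp_injective hemb)
  obtain ⟨m, hanti, hpos⟩ := m
  have step1 : ∏ i, ((m i : ℝ) ^ (-σ i)) ≤ ∏ i, ((m i : ℝ) ^ (-τ i)) := by
    apply prod_rpow_le σ τ m hanti hpos
    intro k
    rw [hτdef, sum_Iic_const_ite hn ε k]
    exact hεk k
  refine step1.trans (le_of_eq ?_)
  show ∏ i, ((m i : ℝ) ^ (-τ i)) = ∏ i, g i (m z) (m i)
  apply Finset.prod_congr rfl
  intro i _
  by_cases hiz : i = z
  · subst hiz
    show (m z : ℝ) ^ (-τ z) = g z (m z) (m z)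
    rw [hgz, if_pos rfl]
    have htz : τ z = 1 + ε := by simp only [hτdef]; simp
    rw [htz]
  · show (m i : ℝ) ^ (-τ i) = g i (m z) (m i)
    have hτi : τ i = 1 := by simp only [hτdef]; rw [if_neg hiz]

    have hle : m i ≤ m z := by
      have hzv : (z : ℕ) = 0 := rfl
      have hiv : (i : ℕ) ≠ 0 := fun h => hiz (Fin.ext (by rw [h, hzv]))
      have : z < i := by rw [Fin.lt_def, hzv]; omega
      exact (hanti this).le
    rw [hgne i hiz, if_pos ⟨hpos i, hle⟩, hτi]

lemma rpow_fsum' {ι : Type*} (x : ℝ) (hx : 0 < x) (s : Finset ι) (f : ι → ℝ) :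
    x ^ (∑ i ∈ s, f i) = ∏ i ∈ s, x ^ f i := by
  classical
  induction s using Finset.cons_induction with
  | empty => simp
  | cons a s ha ih => rw [Finset.sum_cons, Finset.prod_cons, Real.rpow_add hx, ih]

lemma necessity {n : ℕ} (hn : 1 ≤ n) (σ : Fin n → ℝ)
    (hsum : Summable (fun m : {f : Fin n → ℕ // StrictAnti f ∧ ∀ i, 0 < f i} =>
      ∏ i, ((m.1 i : ℝ) ^ (-σ i))))
    (k : Fin n) : ((k : ℕ) + 1 : ℝ) < ∑ j ∈ Finset.Iic k, σ j := by
  classical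
  by_contra hcon
  push_neg at hcon
  set P : (Fin n → ℕ) → Prop := fun f => StrictAnti f ∧ ∀ i, 0 < f i with hP
  set F : {f : Fin n → ℕ // StrictAnti f ∧ ∀ i, 0 < f i} → ℝ :=
    fun m => ∏ i, ((m.1 i : ℝ) ^ (-σ i)) with hF
  have hF0 : ∀ m, 0 ≤ F m :=
    fun m => Finset.prod_nonneg (fun i _ => Real.rpow_nonneg (Nat.cast_nonneg _) _)
  set κ : ℕ := (k : ℕ) with hκ
  set t : ℝ := ∑ j ∈ Finset.Iic k, σ j with ht
  set A : ℕ := 2 ^ (κ + 1) with hA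
  have hA1 : 1 ≤ A := Nat.one_le_two_pow
  have hAR : (1:ℝ) ≤ (A:ℝ) := by exact_mod_cast hA1
  set M : ℕ → ℕ := fun r => n * A ^ (r + 1) with hM
  have hMn : ∀ r, n ≤ M r := fun r =>
    Nat.le_mul_of_pos_right n (Nat.pow_pos (by omega))
  have hM1 : ∀ r, 1 ≤ M r := fun r => le_trans hn (hMn r)
  have hM1R : ∀ r, (1:ℝ) ≤ (M r : ℝ) := fun r => by exact_mod_cast hM1 r
  set v : ℕ → Finset (Fin n → ℕ) := fun r => Fintype.piFinset (fun i =>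
    if (i : ℕ) ≤ κ then Finset.Ioc (2 ^ (κ - (i:ℕ)) * M r) (2 ^ (κ - (i:ℕ) + 1) * M r)
    else {n - (i:ℕ)}) with hv
  -- membership facts
  have hmem_low : ∀ r, ∀ f ∈ v r, ∀ i : Fin n, (i : ℕ) ≤ κ →
      2 ^ (κ - (i:ℕ)) * M r < f i ∧ f i ≤ 2 ^ (κ - (i:ℕ) + 1) * M r := by
    intro r f hf i hi
    rw [hv, Fintype.mem_piFinset] at hf
    have := hf i
    rw [if_pos hi, Finset.mem_Ioc] at this
    exact this
  have hmem_tail : ∀ r, ∀ f ∈ v r, ∀ i : Fin n, ¬((i : ℕ) ≤ κ) → f i = n - (i:ℕ) := by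
    intro r f hf i hi
    rw [hv, Fintype.mem_piFinset] at hf
    have := hf i
    rw [if_neg hi, Finset.mem_singleton] at this
    exact this
  have hbounds : ∀ r, ∀ f ∈ v r, ∀ i : Fin n, (i : ℕ) ≤ κ →
      M r < f i ∧ f i ≤ A * M r := by
    intro r f hf i hi
    obtain ⟨h1, h2⟩ := hmem_low r f hf i hi
    constructor
    · calc M r = 1 * M r := (one_mul _).symm
        _ ≤ 2 ^ (κ - (i:ℕ)) * M r := Nat.mul_le_mul_right _ Nat.one_le_two_pow
        _ < f i := h1
    · calc f i ≤ 2 ^ (κ - (i:ℕ) + 1) * M r := h2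
        _ ≤ A * M r := Nat.mul_le_mul_right _ (Nat.pow_le_pow_right (by omega) (by omega))
  have hPmem : ∀ r, ∀ f ∈ v r, P f := by
    intro r f hf
    constructor
    · intro i j hij
      rw [Fin.lt_def] at hij
      by_cases hj : (j : ℕ) ≤ κ
      · have hi : (i : ℕ) ≤ κ := by omega
        obtain ⟨hj1, hj2⟩ := hmem_low r f hf j hj
        obtain ⟨hi1, hi2⟩ := hmem_low r f hf i hi
        calc f j ≤ 2 ^ (κ - (j:ℕ) + 1) * M r := hj2
          _ ≤ 2 ^ (κ - (i:ℕ)) * M r :=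
            Nat.mul_le_mul_right _ (Nat.pow_le_pow_right (by omega) (by omega))
          _ < f i := hi1
      · rw [hmem_tail r f hf j hj]
        by_cases hi : (i : ℕ) ≤ κ
        · have := (hbounds r f hf i hi).1
          have := hMn r
          omega
        · rw [hmem_tail r f hf i hi]
          have := j.isLt
          omega
    · intro i
      by_cases hi : (i : ℕ) ≤ κ
      · have := (hbounds r f hf i hi).1
        have := hM1 r
        omega
      · rw [hmem_tail r f hf i hi]
        have := i.isLt
        omega
  -- constant c
  set c : ℝ := (∏ i ∈ Finset.Iic k, (A:ℝ) ^ (-|σ i|))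
    * ∏ i ∈ (Finset.Iic k)ᶜ, ((n - (i:ℕ) : ℕ):ℝ) ^ (-σ i) with hc
  have hc0 : 0 < c := by
    apply mul_pos
    · apply Finset.prod_pos
      intro i _
      exact Real.rpow_pos_of_pos (by linarith) _
    · apply Finset.prod_pos
      intro i hi
      apply Real.rpow_pos_of_pos
      have hi' : ¬ ((i:ℕ) ≤ κ) := by
        rw [Finset.mem_compl, Finset.mem_Iic] at hi
        rw [hκ]
        exact fun h => hi (by rw [Fin.le_def]; omega)
      have := i.isLt
      have : 1 ≤ n - (i:ℕ) := by omega
      exact_mod_cast Nat.lt_of_lt_of_le Nat.zero_lt_one this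
  -- term lower bound
  have hterm : ∀ r, ∀ f ∈ v r, c * (M r : ℝ) ^ (-t) ≤ ∏ i, ((f i : ℝ) ^ (-σ i)) := by
    intro r f hf
    rw [← Finset.prod_mul_prod_compl (Finset.Iic k) (fun i => ((f i : ℝ) ^ (-σ i)))]
    have hcompl : ∏ i ∈ (Finset.Iic k)ᶜ, ((f i : ℝ) ^ (-σ i))
        = ∏ i ∈ (Finset.Iic k)ᶜ, ((n - (i:ℕ) : ℕ):ℝ) ^ (-σ i) := by
      apply Finset.prod_congr rfl
      intro i hi
      have hi' : ¬ ((i:ℕ) ≤ κ) := by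
        rw [Finset.mem_compl, Finset.mem_Iic] at hi
        exact fun h => hi (by rw [Fin.le_def]; omega)
      rw [hmem_tail r f hf i hi']
    rw [hcompl]
    have hmain : ∏ i ∈ Finset.Iic k, ((A:ℝ) ^ (-|σ i|)) * (M r : ℝ) ^ (-σ i)
        ≤ ∏ i ∈ Finset.Iic k, ((f i : ℝ) ^ (-σ i)) := by
      apply Finset.prod_le_prod
      · intro i _
        positivity
      · intro i hi
        have hik : (i:ℕ) ≤ κ := by
          rw [Finset.mem_Iic, Fin.le_def] at hi
          exact hi
        obtain ⟨h1, h2⟩ := hbounds r f hf i hik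
        have h1R : (M r : ℝ) < (f i : ℝ) := by exact_mod_cast h1
        have h2R : (f i : ℝ) ≤ (A:ℝ) * (M r : ℝ) := by exact_mod_cast h2
        have hfpos : (0:ℝ) < (f i : ℝ) := by linarith [hM1R r]
        rcases le_or_gt 0 (σ i) with hσi | hσi
        · have : ((A:ℝ) * (M r:ℝ)) ^ (-σ i) ≤ (f i : ℝ) ^ (-σ i) :=
            Real.rpow_le_rpow_of_nonpos hfpos h2R (by linarith)
          calc (A:ℝ) ^ (-|σ i|) * (M r : ℝ) ^ (-σ i)
              = (A:ℝ) ^ (-σ i) * (M r : ℝ) ^ (-σ i) := by rw [abs_of_nonneg hσi]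
            _ = ((A:ℝ) * (M r:ℝ)) ^ (-σ i) := (Real.mul_rpow (by linarith) (by linarith [hM1R r])).symm
            _ ≤ (f i : ℝ) ^ (-σ i) := this
        · have h3 : (M r : ℝ) ^ (-σ i) ≤ (f i : ℝ) ^ (-σ i) :=
            Real.rpow_le_rpow (by linarith [hM1R r]) h1R.le (by linarith)
          have h4 : (A:ℝ) ^ (-|σ i|) ≤ 1 :=
            Real.rpow_le_one_of_one_le_of_nonpos hAR (by simp [abs_nonneg])
          calc (A:ℝ) ^ (-|σ i|) * (M r : ℝ) ^ (-σ i)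
              ≤ 1 * (M r : ℝ) ^ (-σ i) := by
                apply mul_le_mul_of_nonneg_right h4 (by positivity)
            _ = (M r : ℝ) ^ (-σ i) := one_mul _
            _ ≤ (f i : ℝ) ^ (-σ i) := h3
    have hsplit : ∏ i ∈ Finset.Iic k, (((A:ℝ) ^ (-|σ i|)) * (M r : ℝ) ^ (-σ i))
        = (∏ i ∈ Finset.Iic k, (A:ℝ) ^ (-|σ i|)) * (M r : ℝ) ^ (-t) := by
      rw [Finset.prod_mul_distrib]
      congr 1
      rw [ht, ← Finset.sum_neg_distrib, rpow_fsum' _ (by linarith [hM1R r])]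
    calc c * (M r : ℝ) ^ (-t)
        = ((∏ i ∈ Finset.Iic k, (A:ℝ) ^ (-|σ i|)) * (M r : ℝ) ^ (-t))
          * ∏ i ∈ (Finset.Iic k)ᶜ, ((n - (i:ℕ) : ℕ):ℝ) ^ (-σ i) := by
          rw [hc]; ring
      _ = (∏ i ∈ Finset.Iic k, (((A:ℝ) ^ (-|σ i|)) * (M r : ℝ) ^ (-σ i)))
          * ∏ i ∈ (Finset.Iic k)ᶜ, ((n - (i:ℕ) : ℕ):ℝ) ^ (-σ i) := by
          rw [hsplit]
      _ ≤ (∏ i ∈ Finset.Iic k, ((f i : ℝ) ^ (-σ i)))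
          * ∏ i ∈ (Finset.Iic k)ᶜ, ((n - (i:ℕ) : ℕ):ℝ) ^ (-σ i) := by
          apply mul_le_mul_of_nonneg_right hmain
          apply Finset.prod_nonneg
          intro i _
          positivity
  -- cardinality lower bound
  have hcard : ∀ r, M r ^ (κ + 1) ≤ (v r).card := by
    intro r
    rw [hv, Fintype.card_piFinset]
    calc M r ^ (κ+1) = ∏ _i ∈ Finset.Iic k, M r := by
          rw [Finset.prod_const, Fin.card_Iic]
      _ ≤ ∏ i ∈ Finset.Iic k,
            (if ((i : Fin n) : ℕ) ≤ κ then Finset.Ioc (2 ^ (κ - (i:ℕ)) * M r) (2 ^ (κ - (i:ℕ) + 1) * M r)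
              else {n - (i:ℕ)}).card := by
          apply Finset.prod_le_prod'
          intro i hi
          have hik : (i:ℕ) ≤ κ := by rw [Finset.mem_Iic, Fin.le_def] at hi; exact hi
          rw [if_pos hik, Nat.card_Ioc]
          have : 2 ^ (κ - (i:ℕ) + 1) * M r = 2 * (2 ^ (κ - (i:ℕ)) * M r) := by ring
          rw [this]
          have h2 : 1 * M r ≤ 2 ^ (κ - (i:ℕ)) * M r := Nat.mul_le_mul_right _ Nat.one_le_two_pow
          omega
      _ ≤ ∏ i : Fin n,
            (if ((i : Fin n) : ℕ) ≤ κ then Finset.Ioc (2 ^ (κ - (i:ℕ)) * M r) (2 ^ (κ - (i:ℕ) + 1) * M r)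
              else {n - (i:ℕ)}).card := by
          apply Finset.prod_le_prod_of_subset_of_one_le' (Finset.subset_univ _)
          intro i _ hi
          have hik : ¬ ((i:ℕ) ≤ κ) := by
            rw [Finset.mem_Iic, Fin.le_def] at hi
            omega
          rw [if_neg hik, Finset.card_singleton]
  -- blocks are disjoint
  have hdisj : ∀ r r', r < r' → ∀ f, f ∈ v r → f ∉ v r' := by
    intro r r' hrr f hfr hfr'
    set z : Fin n := ⟨0, hn⟩ with hzdef
    have hzκ : ((z:Fin n) : ℕ) ≤ κ := Nat.zero_le κ
    have h1 := (hbounds r f hfr z hzκ).2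
    have h2 := (hbounds r' f hfr' z hzκ).1
    have hM' : A * M r ≤ M r' := by
      rw [hM]
      calc A * (n * A ^ (r+1)) = n * A ^ (r+2) := by ring
        _ ≤ n * A ^ (r'+1) := Nat.mul_le_mul_left n (Nat.pow_le_pow_right (by omega) (by omega))
    omega
  -- conclude
  set u : ℕ → Finset {f : Fin n → ℕ // StrictAnti f ∧ ∀ i, 0 < f i} :=
    fun r => (v r).subtype P with hu
  have hblock : ∀ r, c ≤ ∑ m ∈ u r, F m := by
    intro r
    have e1 : ∑ m ∈ u r, F m = ∑ f ∈ (v r).filter P, ∏ i, ((f i : ℝ) ^ (-σ i)) := by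
      rw [hu]
      exact Finset.sum_subtype_eq_sum_filter (fun f => ∏ i, ((f i : ℝ) ^ (-σ i))) (s := v r)
    have e2 : (v r).filter P = v r := Finset.filter_true_of_mem (hPmem r)
    rw [e1, e2]
    have step : (v r).card • (c * (M r : ℝ) ^ (-t)) ≤ ∑ f ∈ v r, ∏ i, ((f i : ℝ) ^ (-σ i)) :=
      Finset.card_nsmul_le_sum _ _ _ (fun f hf => hterm r f hf)
    have hMpow : ((M r ^ (κ+1) : ℕ) : ℝ) * (c * (M r : ℝ) ^ (-t)) ≤ (v r).card • (c * (M r : ℝ) ^ (-t)) := by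
      rw [nsmul_eq_mul]
      apply mul_le_mul_of_nonneg_right
      · exact_mod_cast hcard r
      · positivity
    have hfinal : c ≤ ((M r ^ (κ+1) : ℕ) : ℝ) * (c * (M r : ℝ) ^ (-t)) := by
      have e3 : ((M r ^ (κ+1) : ℕ) : ℝ) = (M r : ℝ) ^ ((κ+1 : ℕ) : ℝ) := by
        rw [Real.rpow_natCast]
        push_cast
        ring
      rw [e3]
      have e4 : (M r : ℝ) ^ ((κ+1 : ℕ) : ℝ) * (c * (M r : ℝ) ^ (-t))
          = c * (M r : ℝ) ^ (((κ+1 : ℕ) : ℝ) - t) := by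
        rw [Real.rpow_sub (by linarith [hM1R r]), Real.rpow_neg (by linarith [hM1R r])]
        field_simp
      rw [e4]
      have e5 : (1:ℝ) ≤ (M r : ℝ) ^ (((κ+1 : ℕ) : ℝ) - t) := by
        apply Real.one_le_rpow (hM1R r)
        have : t ≤ (κ : ℝ) + 1 := by rw [ht, hκ]; exact hcon
        push_cast
        linarith
      nlinarith [hc0]
    linarith [hfinal.trans (hMpow.trans step)]
  have hudisj : ∀ R : ℕ, (↑(Finset.range R) : Set ℕ).PairwiseDisjoint u := by
    intro R r _ r' _ hne
    simp only [Function.onFun]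
    rw [Finset.disjoint_left]
    intro m hmr hmr'
    rw [hu, Finset.mem_subtype] at hmr hmr'
    rcases lt_or_gt_of_ne hne with h | h
    · exact hdisj r r' h m.1 hmr hmr'
    · exact hdisj r' r h m.1 hmr' hmr
  obtain ⟨R, hR⟩ := exists_nat_gt ((∑' m, F m) / c)
  have hkey : (R : ℝ) * c ≤ ∑' m, F m := by
    have h1 : ∑ m ∈ (Finset.range R).biUnion u, F m ≤ ∑' m, F m :=
      Summable.sum_le_tsum _ (fun m _ => hF0 m) hsum
    rw [Finset.sum_biUnion (hudisj R)] at h1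
    have h2 : (R : ℝ) * c ≤ ∑ r ∈ Finset.range R, ∑ m ∈ u r, F m := by
      calc (R : ℝ) * c = ∑ _r ∈ Finset.range R, c := by
            rw [Finset.sum_const, Finset.card_range, nsmul_eq_mul]
        _ ≤ ∑ r ∈ Finset.range R, ∑ m ∈ u r, F m := Finset.sum_le_sum (fun r _ => hblock r)
    linarith
  rw [div_lt_iff₀ hc0] at hR
  linarith

/-- The multiple series `∑_{m₁ > m₂ > ⋯ > mₙ > 0} ∏ᵢ mᵢ^{-sᵢ}` (with `mᵢ^{-sᵢ}` the complex
power) converges absolutely — i.e. the family indexed by strictly decreasing `n`-tuples of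
positive integers is summable — if and only if `∑_{j=1}^k Re(s_j) > k` for every `k = 1,…,n`. -/
theorem stmt_0 (n : ℕ) (hn : 1 ≤ n) (s : Fin n → ℂ) :
    Summable (fun m : {f : Fin n → ℕ // StrictAnti f ∧ ∀ i, 0 < f i} =>
      ∏ i, ((m.1 i : ℂ) ^ (-(s i)))) ↔
    ∀ k : Fin n, ((k : ℕ) + 1 : ℝ) < ∑ j ∈ Finset.Iic k, (s j).re := by
  have hred : (Summable (fun m : {f : Fin n → ℕ // StrictAnti f ∧ ∀ i, 0 < f i} =>
      ∏ i, ((m.1 i : ℂ) ^ (-(s i))))) ↔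
      Summable (fun m : {f : Fin n → ℕ // StrictAnti f ∧ ∀ i, 0 < f i} =>
        ∏ i, ((m.1 i : ℝ) ^ (-(s i).re))) := by
    rw [← summable_norm_iff]
    apply summable_congr
    intro m
    rw [norm_prod]
    apply Finset.prod_congr rfl
    intro i _
    have hpos : (0:ℝ) < (m.1 i : ℝ) := by exact_mod_cast m.2.2 i
    have hcast : ((m.1 i : ℕ) : ℂ) = (((m.1 i : ℕ) : ℝ) : ℂ) := by push_cast; rfl
    rw [hcast, Complex.norm_cpow_eq_rpow_re_of_pos hpos, Complex.neg_re]
  rw [hred]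
  constructor
  · intro h k
    exact necessity hn (fun i => (s i).re) h k
  · intro h
    exact sufficiency hn (fun i => (s i).re) h
end

section
/- For every n ≥ 1 and all integers k₁,…,kₙ ∈ ℤ, the evaluation at t = q of the nested expression P_q^{k₁}(y · P_q^{k₂}(y · ⋯ P_q^{kₙ}(y)⋯)) ∈ A equals, in ℚ[[q]], the modified q-multiple zeta value ∑_{m₁ > m₂ > ⋯ > mₙ > 0} q^{m₁} · ∏_{i=1}^n (1−q^{m_i})^{-k_i}, where (1−q^{m_i})^{-k_i} is the k_i-th integer power of the unit 1−q^{m_i} in ℚ[[q]] and the sum converges in the q-adic topology. -/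
/-- `A = (ℚ[[q]])[[t]]`: power series in `t` with coefficients in `ℚ[[q]]`. -/
abbrev A := PowerSeries (PowerSeries ℚ)

/-- `P_q(∑_{m≥1} aₘ(q) tᵐ) = ∑_{m≥1} aₘ(q)·(1−qᵐ)⁻¹ tᵐ`. -/
noncomputable def Pq (f : A) : A :=
  PowerSeries.mk fun m =>
    if m = 0 then 0
    else PowerSeries.coeff (R := PowerSeries ℚ) m f * (1 - (PowerSeries.X : PowerSeries ℚ) ^ m)⁻¹

/-- `D_q(∑_{m≥1} aₘ(q) tᵐ) = ∑_{m≥1} (1−qᵐ)·aₘ(q) tᵐ`. -/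
noncomputable def Dq (f : A) : A :=
  PowerSeries.mk fun m =>
    (1 - (PowerSeries.X : PowerSeries ℚ) ^ m) * PowerSeries.coeff (R := PowerSeries ℚ) m f

/-- `Pz k` is the `k`-fold iterate of `P_q` for `k ≥ 0` and the `(−k)`-fold iterate of
`D_q` for `k < 0`. -/
noncomputable def Pz : ℤ → A → A
  | Int.ofNat k => Pq^[k]
  | Int.negSucc k => Dq^[k + 1]

/-- `y = ∑_{m≥1} tᵐ ∈ A`. -/
noncomputable def yq : A :=
  PowerSeries.mk fun m => if m = 0 then 0 else 1

/-- The nested expression `P_q^{k₁}(y · P_q^{k₂}(y ⋯ P_q^{kₙ}(y)⋯)) ∈ A`. -/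
noncomputable def nestq : (n : ℕ) → (Fin n → ℤ) → A
  | 0, _ => 1
  | n + 1, ks => Pz (ks 0) (yq * nestq n fun i => ks i.succ)

/-- Evaluation at `t = q`, sending `∑_{m≥1} aₘ(q) tᵐ` to `∑_{m≥1} aₘ(q)·qᵐ ∈ ℚ[[q]]`. -/
noncomputable def evq (f : A) : PowerSeries ℚ :=
  PowerSeries.mk fun N =>
    ∑ m ∈ Finset.Icc 1 N, PowerSeries.coeff (R := ℚ) (N - m) (PowerSeries.coeff (R := PowerSeries ℚ) m f)

/-- Integer power of a power series: `a ^ k` for `k ≥ 0` and `(a⁻¹) ^ (−k)` for `k < 0`. -/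
noncomputable def zpu (a : PowerSeries ℚ) (k : ℤ) : PowerSeries ℚ :=
  if 0 ≤ k then a ^ k.toNat else (a⁻¹) ^ (-k).toNat

namespace QMZVAux

open PowerSeries Finset

lemma coeff_Pq (f : A) (m : ℕ) (hm : m ≠ 0) :
    coeff (R := PowerSeries ℚ) m (Pq f) =
      (1 - (X : PowerSeries ℚ) ^ m)⁻¹ * coeff (R := PowerSeries ℚ) m f := by
  simp [Pq, coeff_mk, hm, mul_comm]

lemma coeff_Pq_zero (f : A) : coeff (R := PowerSeries ℚ) 0 (Pq f) = 0 := by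
  simp [Pq, coeff_mk]

lemma coeff_Dq (f : A) (m : ℕ) :
    coeff (R := PowerSeries ℚ) m (Dq f) =
      (1 - (X : PowerSeries ℚ) ^ m) * coeff (R := PowerSeries ℚ) m f := by
  simp [Dq, coeff_mk]

lemma coeff_Dq_zero (f : A) : coeff (R := PowerSeries ℚ) 0 (Dq f) = 0 := by
  simp [coeff_Dq]

lemma coeff_Pq_iter (j : ℕ) (f : A) (m : ℕ) (hm : m ≠ 0) :
    coeff (R := PowerSeries ℚ) m (Pq^[j] f) =
      ((1 - (X : PowerSeries ℚ) ^ m)⁻¹) ^ j * coeff (R := PowerSeries ℚ) m f := by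
  induction j generalizing f with
  | zero => simp
  | succ j ih =>
    rw [Function.iterate_succ_apply', coeff_Pq _ _ hm, ih, pow_succ]
    ring

lemma coeff_Dq_iter (j : ℕ) (f : A) (m : ℕ) :
    coeff (R := PowerSeries ℚ) m (Dq^[j] f) =
      (1 - (X : PowerSeries ℚ) ^ m) ^ j * coeff (R := PowerSeries ℚ) m f := by
  induction j generalizing f with
  | zero => simp
  | succ j ih =>
    rw [Function.iterate_succ_apply', coeff_Dq, ih, pow_succ]
    ring

lemma coeff_Pz (k : ℤ) (f : A) (m : ℕ) (hm : m ≠ 0) :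
    coeff (R := PowerSeries ℚ) m (Pz k f) =
      zpu (1 - (X : PowerSeries ℚ) ^ m) (-k) * coeff (R := PowerSeries ℚ) m f := by
  cases k with
  | ofNat j =>
    rw [show Pz (Int.ofNat j) f = Pq^[j] f from rfl, coeff_Pq_iter j f m hm]
    congr 1
    cases j with
    | zero => simp [zpu]
    | succ j =>
      have h1 : ¬ (0 : ℤ) ≤ -(Int.ofNat (j + 1)) := by
        rw [Int.ofNat_eq_natCast]; omega
      have h2 : (- -(Int.ofNat (j + 1))).toNat = j + 1 := by
        rw [Int.ofNat_eq_natCast]; omega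
      rw [zpu, if_neg h1, h2]
  | negSucc j =>
    rw [show Pz (Int.negSucc j) f = Dq^[j + 1] f from rfl, coeff_Dq_iter]
    have h1 : (0 : ℤ) ≤ -(Int.negSucc j) := by rw [Int.negSucc_eq]; omega
    have h2 : (-(Int.negSucc j)).toNat = j + 1 := by rw [Int.negSucc_eq]; omega
    rw [zpu, if_pos h1, h2]

lemma coeff_Pz_zero (k : ℤ) (f : A) (hf : coeff (R := PowerSeries ℚ) 0 f = 0) :
    coeff (R := PowerSeries ℚ) 0 (Pz k f) = 0 := by
  cases k with
  | ofNat j =>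
    cases j with
    | zero => exact hf
    | succ j =>
      rw [show Pz (Int.ofNat (j + 1)) f = Pq^[j + 1] f from rfl,
        Function.iterate_succ_apply', coeff_Pq_zero]
  | negSucc j =>
    rw [show Pz (Int.negSucc j) f = Dq^[j + 1] f from rfl,
      Function.iterate_succ_apply', coeff_Dq_zero]

lemma coeff_yq_mul (g : A) (m : ℕ) :
    coeff (R := PowerSeries ℚ) m (yq * g) = ∑ b ∈ Finset.range m, coeff (R := PowerSeries ℚ) b g := by
  rw [coeff_mul, Finset.Nat.sum_antidiagonal_eq_sum_range_succ_mk, Finset.sum_range_succ']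
  simp only [yq, coeff_mk, Nat.succ_ne_zero, if_neg, Nat.add_eq_zero, and_false, if_false,
    if_true, one_mul, Nat.sub_zero, ite_mul, zero_mul]
  rw [add_zero]
  have h2 : ∀ j ∈ Finset.range m,
      coeff (R := PowerSeries ℚ) (m - (j + 1)) g =
        (fun b => coeff (R := PowerSeries ℚ) b g) (m - 1 - j) := by
    intro j _
    show coeff (R := PowerSeries ℚ) (m - (j + 1)) g = coeff (R := PowerSeries ℚ) (m - 1 - j) g
    have h3 : m - (j + 1) = m - 1 - j := by omega
    rw [h3]
  rw [Finset.sum_congr rfl h2]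
  exact Finset.sum_range_reflect (fun b => coeff (R := PowerSeries ℚ) b g) m

/-- `msum n ks m`: closed form of the `tᵐ`-coefficient of `nestq n ks`. -/
noncomputable def msum : (n : ℕ) → (Fin n → ℤ) → ℕ → PowerSeries ℚ
  | 0, _, m => if m = 0 then 1 else 0
  | n + 1, ks, m =>
      zpu (1 - (PowerSeries.X : PowerSeries ℚ) ^ m) (-(ks 0)) *
        ∑ b ∈ Finset.range m, msum n (fun i => ks i.succ) b

lemma coeff_nestq (n : ℕ) (ks : Fin n → ℤ) (m : ℕ) :
    coeff (R := PowerSeries ℚ) m (nestq n ks) = msum n ks m := by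
  induction n generalizing m with
  | zero =>
    show coeff (R := PowerSeries ℚ) m 1 = _
    simp [msum, coeff_one]
  | succ n ih =>
    show coeff (R := PowerSeries ℚ) m (Pz (ks 0) (yq * nestq n fun i => ks i.succ)) = _
    rcases eq_or_ne m 0 with rfl | hm
    · rw [coeff_Pz_zero]
      · simp [msum]
      · rw [coeff_yq_mul]
        simp
    · rw [coeff_Pz _ _ _ hm, coeff_yq_mul]
      simp only [ih]
      rfl

open Classical in
/-- Strictly decreasing positive tuples of length `n+1` with top entry `m`. -/
noncomputable def Tfin (n m : ℕ) : Finset (Fin (n + 1) → ℕ) :=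
  (Fintype.piFinset fun _ => Finset.range (m + 1)).filter
    fun f => StrictAnti f ∧ (∀ i, 0 < f i) ∧ f 0 = m

lemma mem_Tfin {n m : ℕ} {f : Fin (n + 1) → ℕ} :
    f ∈ Tfin n m ↔ (∀ i, f i ≤ m) ∧ StrictAnti f ∧ (∀ i, 0 < f i) ∧ f 0 = m := by
  simp [Tfin, Fintype.mem_piFinset, Nat.lt_succ_iff]

lemma finone_eq (a b : Fin (0 + 1)) : a = b := by
  have ha := a.isLt
  have hb := b.isLt
  exact Fin.ext (by omega)

lemma strictAnti_cons {n m : ℕ} {f : Fin (n + 1) → ℕ} (hf : StrictAnti f)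
    (h : f 0 < m) : StrictAnti (Fin.cons m f : Fin (n + 2) → ℕ) := by
  intro a b hab
  induction b using Fin.cases with
  | zero => exact absurd hab (Fin.not_lt_zero a).elim
  | succ j =>
    induction a using Fin.cases with
    | zero =>
      simpa using lt_of_le_of_lt (hf.antitone (Fin.zero_le j)) h
    | succ i =>
      simpa using hf (Fin.succ_lt_succ_iff.mp hab)

lemma msum_eq (n : ℕ) (ks : Fin (n + 1) → ℤ) (m : ℕ) :
    msum (n + 1) ks m =
      ∑ f ∈ Tfin n m, ∏ i, zpu (1 - (X : PowerSeries ℚ) ^ f i) (-(ks i)) := by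
  induction n generalizing m with
  | zero =>
    rcases eq_or_ne m 0 with rfl | hm
    · have hT : Tfin 0 0 = ∅ := by
        ext f
        simp only [mem_Tfin, Finset.notMem_empty, iff_false, not_and]
        intro _ _ hpos h0
        exact absurd (h0 ▸ hpos 0) (lt_irrefl 0)
      simp [msum, hT]
    · have hT : Tfin 0 m = {fun _ => m} := by
        ext f
        simp only [mem_Tfin, Finset.mem_singleton]
        constructor
        · rintro ⟨-, -, -, h0⟩
          funext i
          rw [finone_eq i 0, h0]
        · rintro rfl
          exact ⟨fun _ => le_refl m,
            fun a b hab => absurd hab (by rw [finone_eq a b]; exact lt_irrefl b),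
            fun _ => Nat.pos_of_ne_zero hm, rfl⟩
      rw [hT, Finset.sum_singleton]
      show zpu _ _ * (∑ b ∈ Finset.range m, if b = 0 then 1 else 0) = _
      rw [Finset.sum_ite_eq' (Finset.range m) 0 fun _ => (1 : PowerSeries ℚ)]
      rw [if_pos (Finset.mem_range.mpr (Nat.pos_of_ne_zero hm)), mul_one,
        Fin.prod_univ_one]
  | succ n ih =>
    show zpu (1 - (X : PowerSeries ℚ) ^ m) (-(ks 0)) *
        ∑ b ∈ Finset.range m, msum (n + 1) (fun i => ks i.succ) b = _
    simp only [ih]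
    have hR : ∀ g ∈ Tfin (n + 1) m,
        (∏ i, zpu (1 - (X : PowerSeries ℚ) ^ g i) (-(ks i))) =
          zpu (1 - (X : PowerSeries ℚ) ^ m) (-(ks 0)) *
            ∏ i : Fin (n + 1), zpu (1 - (X : PowerSeries ℚ) ^ g i.succ) (-(ks i.succ)) := by
      intro g hg
      obtain ⟨-, -, -, h0⟩ := mem_Tfin.mp hg
      rw [Fin.prod_univ_succ, h0]
    rw [Finset.sum_congr rfl hR, ← Finset.mul_sum]
    congr 1
    rw [Finset.sum_sigma']
    refine Finset.sum_bij' (fun x _ => Fin.cons m x.2)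
      (fun g _ => ⟨g (Fin.succ 0), fun i => g i.succ⟩) ?_ ?_ ?_ ?_ ?_
    · rintro ⟨b, f⟩ hx
      obtain ⟨hb, hf⟩ := Finset.mem_sigma.mp hx
      rw [Finset.mem_range] at hb
      obtain ⟨hle, hanti, hpos, h0⟩ := mem_Tfin.mp hf
      refine mem_Tfin.mpr ⟨?_, strictAnti_cons hanti (h0 ▸ hb), ?_, Fin.cons_zero _ _⟩
      · intro i
        induction i using Fin.cases with
        | zero => simp
        | succ j => simpa using le_of_lt (lt_of_le_of_lt (hle j) hb)
      · intro i
        induction i using Fin.cases with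
        | zero => simpa using lt_of_le_of_lt (Nat.zero_le b) hb
        | succ j => simpa using hpos j
    · intro g hg
      obtain ⟨hle, hanti, hpos, h0⟩ := mem_Tfin.mp hg
      refine Finset.mem_sigma.mpr ⟨?_, mem_Tfin.mpr ⟨?_, ?_, ?_, rfl⟩⟩
      · exact Finset.mem_range.mpr (h0 ▸ hanti (Fin.succ_pos 0))
      · intro i
        exact hanti.antitone (Fin.succ_le_succ_iff.mpr (Fin.zero_le i))
      · exact hanti.comp_strictMono Fin.strictMono_succ
      · intro i
        exact hpos i.succ
    · rintro ⟨b, f⟩ hx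
      obtain ⟨hb, hf⟩ := Finset.mem_sigma.mp hx
      obtain ⟨-, -, -, h0⟩ := mem_Tfin.mp hf
      simp only at h0
      subst h0
      simp only [Fin.cons_succ]
    · intro g hg
      obtain ⟨-, -, -, h0⟩ := mem_Tfin.mp hg
      funext i
      induction i using Fin.cases with
      | zero => simpa using h0.symm
      | succ j => simp
    · rintro ⟨b, f⟩ hx
      simp only [Fin.cons_succ]

end QMZVAux

open PowerSeries Finset QMZVAux in
/-- For integers `k₁,…,kₙ`, the evaluation at `t = q` of
`P_q^{k₁}(y · P_q^{k₂}(y ⋯ P_q^{kₙ}(y)⋯))` equals the modified `q`-multiple zeta value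
`∑_{m₁ > ⋯ > mₙ > 0} q^{m₁}·∏ᵢ (1−q^{mᵢ})^{-kᵢ} ∈ ℚ[[q]]`. -/
theorem stmt_6 (n : ℕ) (hn : 1 ≤ n) (ks : Fin n → ℤ) :
    evq (nestq n ks) =
      PowerSeries.mk fun N =>
        ∑' m : {f : Fin n → ℕ // StrictAnti f ∧ ∀ i, 0 < f i},
          PowerSeries.coeff (R := ℚ) N
            ((PowerSeries.X : PowerSeries ℚ) ^ (m.1 ⟨0, hn⟩) *
              ∏ i, zpu (1 - (PowerSeries.X : PowerSeries ℚ) ^ (m.1 i)) (-(ks i))) := by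
  classical
  cases n with
  | zero => omega
  | succ n =>
    have hzero : (⟨0, hn⟩ : Fin (n + 1)) = 0 := rfl
    ext N
    rw [evq, coeff_mk, coeff_mk]
    -- the function being summed
    set G : (Fin (n + 1) → ℕ) → ℚ := fun f =>
      PowerSeries.coeff (R := ℚ) N
        ((PowerSeries.X : PowerSeries ℚ) ^ (f 0) *
          ∏ i, zpu (1 - (PowerSeries.X : PowerSeries ℚ) ^ (f i)) (-(ks i))) with hG
    set p : (Fin (n + 1) → ℕ) → Prop := fun f => StrictAnti f ∧ ∀ i, 0 < f i with hp
    set s : Finset (Fin (n + 1) → ℕ) :=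
      Fintype.piFinset fun _ => Finset.range (N + 1) with hs
    have hRHS : (∑' m : {f : Fin (n + 1) → ℕ // StrictAnti f ∧ ∀ i, 0 < f i},
          PowerSeries.coeff (R := ℚ) N
            ((PowerSeries.X : PowerSeries ℚ) ^ (m.1 ⟨0, hn⟩) *
              ∏ i, zpu (1 - (PowerSeries.X : PowerSeries ℚ) ^ (m.1 i)) (-(ks i)))) =
        ∑ f ∈ s.filter p, G f := by
      rw [← Finset.sum_subtype_eq_sum_filter]
      refine tsum_eq_sum ?_
      intro x hx
      rw [Finset.mem_subtype] at hx
      have : ∃ i, ¬ x.1 i ∈ Finset.range (N + 1) := by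
        by_contra hcon
        push_neg at hcon
        exact hx (Fintype.mem_piFinset.mpr hcon)
      obtain ⟨i, hi⟩ := this
      rw [Finset.mem_range, not_lt] at hi
      have h0 : N < x.1 ⟨0, hn⟩ := by
        calc N < N + 1 := Nat.lt_succ_self N
        _ ≤ x.1 i := hi
        _ ≤ x.1 ⟨0, hn⟩ := x.2.1.antitone (by rw [hzero]; exact Fin.zero_le i)
      rw [mul_comm, PowerSeries.coeff_mul_X_pow', if_neg (not_le.mpr h0)]
    rw [hRHS]
    have hmaps : ∀ f ∈ s.filter p, f 0 ∈ Finset.Icc 1 N := by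
      intro f hf
      rw [Finset.mem_filter] at hf
      obtain ⟨hmem, -, hpos⟩ := hf
      rw [Finset.mem_Icc]
      exact ⟨hpos 0, Nat.lt_succ_iff.mp (Finset.mem_range.mp (Fintype.mem_piFinset.mp hmem 0))⟩
    rw [← Finset.sum_fiberwise_of_maps_to hmaps G]
    refine Finset.sum_congr rfl fun m hm => ?_
    rw [Finset.mem_Icc] at hm
    have hfib : (s.filter p).filter (fun f => f 0 = m) = Tfin n m := by
      ext f
      simp only [Finset.mem_filter, mem_Tfin, hs, Fintype.mem_piFinset, Finset.mem_range,
        Nat.lt_succ_iff, hp]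
      constructor
      · rintro ⟨⟨-, hanti, hpos⟩, h0⟩
        exact ⟨fun i => h0 ▸ hanti.antitone (Fin.zero_le i), hanti, hpos, h0⟩
      · rintro ⟨hle, hanti, hpos, h0⟩
        exact ⟨⟨fun i => le_trans (hle i) hm.2, hanti, hpos⟩, h0⟩
    rw [hfib, coeff_nestq, msum_eq, map_sum]
    refine Finset.sum_congr rfl fun f hf => ?_
    obtain ⟨-, -, -, h0⟩ := mem_Tfin.mp hf
    rw [hG]
    simp only
    rw [h0, mul_comm, PowerSeries.coeff_mul_X_pow', if_pos hm.2]
end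

section
/- For every n ≥ 1 and all natural numbers k₁,…,kₙ ∈ ℕ, the following identity holds in ℚ[[q]]: ∑_{m₁ > m₂ > ⋯ > mₙ > 0} q^{m₁} ∏_{j=1}^n (1−q^{m_j})^{k_j} = ∑_{l₁=0}^{k₁} ⋯ ∑_{lₙ=0}^{kₙ} (∏_{j=1}^n (−1)^{l_j+1} C(k_j, l_j)) · ∏_{j=1}^n q^{L_j}/(q^{L_j}−1), where L_j := l₁ + ⋯ + l_j + 1 and q^{L}/(q^{L}−1) denotes the element −q^{L}·(1−q^{L})^{-1} of ℚ[[q]] (with (1−q^{L})^{-1} the inverse of the unit 1−q^{L}). -/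
open PowerSeries Finset
open scoped Classical

noncomputable def H (L : ℕ) : PowerSeries ℚ :=
  PowerSeries.mk fun N => if ∃ t, N = L * (t + 1) then (1 : ℚ) else 0

lemma mul_succ_eq (L t : ℕ) : L * (t + 1) = L * t + L := by ring

lemma exists_shift {L M : ℕ} (hL : 0 < L) (h2 : L < M) :
    (∃ t, M = L * (t + 1)) ↔ (∃ t, M - L = L * (t + 1)) := by
  constructor
  · rintro ⟨t, rfl⟩
    match t with
    | 0 => omega
    | t + 1 =>
      refine ⟨t, ?_⟩
      have h := mul_succ_eq L (t + 1)
      omega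
  · rintro ⟨t, ht⟩
    refine ⟨t + 1, ?_⟩
    have h := mul_succ_eq L (t + 1)
    omega

lemma one_sub_mul_H (L : ℕ) (hL : 0 < L) :
    (1 - (PowerSeries.X : PowerSeries ℚ) ^ L) * H L = PowerSeries.X ^ L := by
  ext M
  rw [sub_mul, one_mul, map_sub, coeff_X_pow_mul' (H L) L M, coeff_X_pow]
  simp only [H, coeff_mk]
  split_ifs with h1 h2 h3 h4 h5 h6 h7 h8 h9 h10
  all_goals try norm_num
  · obtain ⟨t, ht⟩ := h3; have := mul_succ_eq L t; omega
  · exact h3 ((exists_shift hL (by omega)).mp h1)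
  · obtain ⟨t, ht⟩ := h1; have := mul_succ_eq L t; omega
  · obtain ⟨t, ht⟩ := h8; have := mul_succ_eq L t; omega
  · exact h1 ((exists_shift hL (by omega)).mpr h8)
  · exact h1 ⟨0, by omega⟩
  · omega

lemma geomH (L : ℕ) (hL : 0 < L) :
    (PowerSeries.X : PowerSeries ℚ) ^ L * (1 - PowerSeries.X ^ L)⁻¹ = H L := by
  have hu : constantCoeff (1 - (PowerSeries.X : PowerSeries ℚ) ^ L) ≠ 0 := by
    simp [zero_pow hL.ne']
  calc (PowerSeries.X : PowerSeries ℚ) ^ L * (1 - PowerSeries.X ^ L)⁻¹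
      = ((1 - (PowerSeries.X : PowerSeries ℚ) ^ L) * H L) * (1 - PowerSeries.X ^ L)⁻¹ := by
        rw [one_sub_mul_H L hL]
    _ = H L * ((1 - (PowerSeries.X : PowerSeries ℚ) ^ L) * (1 - PowerSeries.X ^ L)⁻¹) := by ring
    _ = H L := by rw [PowerSeries.mul_inv_cancel _ hu, mul_one]

variable {n : ℕ}

def Psi (c : Fin n → ℕ) : Fin n → ℕ := fun j => ∑ i ∈ Finset.Ici j, (c i + 1)

def nxt (m : Fin n → ℕ) (j : Fin n) : ℕ := if h : (j : ℕ) + 1 < n then m ⟨(j : ℕ) + 1, h⟩ else 0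

def Phi (m : Fin n → ℕ) : Fin n → ℕ := fun j => m j - nxt m j - 1

lemma nxt_pos {j : Fin n} (h : (j : ℕ) + 1 < n) (f : Fin n → ℕ) :
    nxt f j = f ⟨(j : ℕ) + 1, h⟩ := dif_pos h

lemma nxt_neg {j : Fin n} (h : ¬ (j : ℕ) + 1 < n) (f : Fin n → ℕ) : nxt f j = 0 := dif_neg h

lemma Ioi_eq_Ici {j : Fin n} (h : (j : ℕ) + 1 < n) :
    Finset.Ioi j = Finset.Ici (⟨(j : ℕ) + 1, h⟩ : Fin n) := by
  ext i
  simp only [Finset.mem_Ioi, Finset.mem_Ici, Fin.lt_def, Fin.le_def]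
  exact ⟨fun hi => hi, fun hi => hi⟩

lemma Ioi_eq_empty' {j : Fin n} (h : ¬ (j : ℕ) + 1 < n) : Finset.Ioi j = (∅ : Finset (Fin n)) := by
  ext i
  simp only [Finset.mem_Ioi, Fin.lt_def, Finset.notMem_empty, iff_false]
  have := i.isLt
  omega

lemma Psi_eq (c : Fin n → ℕ) (j : Fin n) : Psi c j = c j + 1 + nxt (Psi c) j := by
  unfold Psi nxt
  rw [← Finset.Ioi_insert, Finset.sum_insert Finset.notMem_Ioi_self]
  split_ifs with h
  · rw [Ioi_eq_Ici h]
  · rw [Ioi_eq_empty' h]; simp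

lemma Psi_pos (c : Fin n → ℕ) (j : Fin n) : 0 < Psi c j := by
  rw [Psi_eq]; omega

lemma Psi_strictAnti (c : Fin n → ℕ) : StrictAnti (Psi c) := by
  intro a b hab
  unfold Psi
  exact Finset.sum_lt_sum_of_subset (Finset.Ici_subset_Ici.mpr hab.le)
    (Finset.mem_Ici.mpr le_rfl) (by rw [Finset.mem_Ici]; exact hab.not_ge)
    (Nat.succ_pos _) (fun j _ _ => Nat.zero_le _)

lemma Phi_Psi (c : Fin n → ℕ) : Phi (Psi c) = c := by
  funext j
  have := Psi_eq c j
  unfold Phi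
  omega

lemma Psi_Phi {m : Fin n → ℕ} (hm : StrictAnti m) (hp : ∀ i, 0 < m i) : Psi (Phi m) = m := by
  funext j
  suffices h : ∀ t (j : Fin n), n - 1 - (j : ℕ) = t → Psi (Phi m) j = m j from h _ j rfl
  intro t
  induction t with
  | zero =>
    intro j hj
    have hlast : ¬ (j : ℕ) + 1 < n := by have := j.isLt; omega
    rw [Psi_eq, nxt_neg hlast]
    have hPhi : Phi m j = m j - nxt m j - 1 := rfl
    rw [nxt_neg hlast] at hPhi
    have := hp j
    omega
  | succ t ih =>
    intro j hj
    have hlt : (j : ℕ) + 1 < n := by have := j.isLt; omega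
    have ihj := ih ⟨(j : ℕ) + 1, hlt⟩ (by simp only [Fin.val_mk]; omega)
    rw [Psi_eq, nxt_pos hlt, ihj]
    have hPhi : Phi m j = m j - nxt m j - 1 := rfl
    rw [nxt_pos hlt] at hPhi
    have hmono := hm (show j < ⟨(j : ℕ) + 1, hlt⟩ from by rw [Fin.lt_def]; exact Nat.lt_succ_self _)
    have := hp j
    omega

def decEquiv (n : ℕ) : (Fin n → ℕ) ≃ {f : Fin n → ℕ // StrictAnti f ∧ ∀ i, 0 < f i} where
  toFun c := ⟨Psi c, Psi_strictAnti c, Psi_pos c⟩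
  invFun m := Phi m.1
  left_inv := Phi_Psi
  right_inv m := Subtype.ext (Psi_Phi m.2.1 m.2.2)

lemma Ici_zero (hn : 1 ≤ n) : Finset.Ici (⟨0, hn⟩ : Fin n) = Finset.univ := by
  ext i; simp only [Finset.mem_Ici, Finset.mem_univ, iff_true, Fin.le_def]; exact Nat.zero_le _

lemma exponent_eq (hn : 1 ≤ n) (c l : Fin n → ℕ) :
    Psi c ⟨0, hn⟩ + ∑ j, Psi c j * l j
      = ∑ j, ((∑ i ∈ Finset.Iic j, l i) + 1) * (c j + 1) := by
  unfold Psi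
  rw [Ici_zero hn]
  have swap : ∑ j : Fin n, ∑ i ∈ Finset.Ici j, (c i + 1) * l j
      = ∑ i : Fin n, ∑ j ∈ Finset.Iic i, (c i + 1) * l j :=
    Finset.sum_comm' (by
      intro x y
      simp only [Finset.mem_univ, Finset.mem_Ici, Finset.mem_Iic, true_and, and_true])
  calc ∑ i, (c i + 1) + ∑ j, (∑ i ∈ Finset.Ici j, (c i + 1)) * l j
      = ∑ i, (c i + 1) + ∑ j : Fin n, ∑ i ∈ Finset.Ici j, (c i + 1) * l j := by
        simp_rw [Finset.sum_mul]
    _ = ∑ i, (c i + 1) + ∑ i : Fin n, ∑ j ∈ Finset.Iic i, (c i + 1) * l j := by rw [swap]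
    _ = ∑ i, (c i + 1) + ∑ i : Fin n, (c i + 1) * ∑ j ∈ Finset.Iic i, l j := by
        simp_rw [Finset.mul_sum]
    _ = ∑ j, ((∑ i ∈ Finset.Iic j, l i) + 1) * (c j + 1) := by
        rw [← Finset.sum_add_distrib]
        apply Finset.sum_congr rfl
        intro i _
        ring

lemma ind_zero (L : Fin n → ℕ) (hL : ∀ j, 0 < L j) (N : ℕ) :
    ∀ c ∉ Fintype.piFinset (fun _ : Fin n => Finset.range (N + 1)),
      (if N = ∑ j, L j * (c j + 1) then (1 : ℚ) else 0) = 0 := by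
  intro c hc
  rw [if_neg]
  intro hN
  rw [Fintype.mem_piFinset] at hc
  push_neg at hc
  obtain ⟨j, hj⟩ := hc
  rw [Finset.mem_range] at hj
  have h1 : L j * (c j + 1) ≤ ∑ j, L j * (c j + 1) :=
    Finset.single_le_sum (f := fun i => L i * (c i + 1)) (fun i _ => Nat.zero_le _)
      (Finset.mem_univ j)
  have h2 : c j + 1 ≤ L j * (c j + 1) := Nat.le_mul_of_pos_left _ (hL j)
  omega

lemma coeff_prod_H (L : Fin n → ℕ) (hL : ∀ j, 0 < L j) (N : ℕ) :
    PowerSeries.coeff N (∏ j, H (L j))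
      = ∑' c : Fin n → ℕ, (if N = ∑ j, L j * (c j + 1) then (1 : ℚ) else 0) := by
  rw [tsum_eq_sum (ind_zero L hL N)]
  rw [PowerSeries.coeff_prod]
  simp only [H, coeff_mk]
  simp only [Finset.prod_boole]
  simp only [Finset.sum_boole]
  congr 1
  norm_cast
  rw [← Finset.card_filter]
  apply Finset.card_bij' (fun a _ => fun j => a j / L j - 1)
    (fun c _ => Finsupp.equivFunOnFinite.symm (fun j => L j * (c j + 1)))
  · intro a ha
    rw [Finset.mem_filter] at ha ⊢
    obtain ⟨hmem, hdiv⟩ := ha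
    rw [Finset.mem_finsuppAntidiag] at hmem
    constructor
    · rw [Fintype.mem_piFinset]
      intro j
      rw [Finset.mem_range]
      obtain ⟨t, ht⟩ := hdiv j (Finset.mem_univ j)
      have h1 : a j ≤ N := hmem.1 ▸ Finset.single_le_sum
        (fun i _ => Nat.zero_le _) (Finset.mem_univ j)
      have : a j / L j - 1 ≤ a j := le_trans (Nat.sub_le _ _) (Nat.div_le_self _ _)
      omega
    · rw [← hmem.1]
      apply Finset.sum_congr rfl
      intro j _
      obtain ⟨t, ht⟩ := hdiv j (Finset.mem_univ j)
      simp only [ht, Nat.mul_div_cancel_left _ (hL j), Nat.add_sub_cancel]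
  · intro c hc
    rw [Finset.mem_filter] at hc ⊢
    constructor
    · rw [Finset.mem_finsuppAntidiag]
      constructor
      · exact hc.2.symm
      · intro j _
        exact Finset.mem_univ j
    · intro j _
      exact ⟨c j, by simp [Finsupp.equivFunOnFinite]⟩
  · intro a ha
    rw [Finset.mem_filter] at ha
    ext j
    obtain ⟨t, ht⟩ := ha.2 j (Finset.mem_univ j)
    simp [Finsupp.equivFunOnFinite, ht, Nat.mul_div_cancel_left _ (hL j)]
  · intro c hc
    funext j
    simp [Finsupp.equivFunOnFinite, Nat.mul_div_cancel_left _ (hL j)]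

lemma binom_expand (M K : ℕ) :
    (1 - (PowerSeries.X : PowerSeries ℚ) ^ M) ^ K
      = ∑ l : Fin (K + 1),
          ((-1 : PowerSeries ℚ) ^ (l : ℕ) * ((K.choose l : ℕ) : PowerSeries ℚ))
            * PowerSeries.X ^ (M * (l : ℕ)) := by
  have h1 : (1 - (PowerSeries.X : PowerSeries ℚ) ^ M) = (-(PowerSeries.X ^ M)) + 1 := by ring
  rw [h1, add_pow]
  rw [Fin.sum_univ_eq_sum_range
    (fun l => ((-1 : PowerSeries ℚ) ^ l * ((K.choose l : ℕ) : PowerSeries ℚ))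
      * PowerSeries.X ^ (M * l)) (K + 1)]
  apply Finset.sum_congr rfl
  intro i _
  rw [neg_pow, one_pow, mul_one, ← pow_mul]
  ring

lemma coeff_summand (hn : 1 ≤ n) (k : Fin n → ℕ) (N : ℕ) (m : Fin n → ℕ) :
    PowerSeries.coeff N
        ((PowerSeries.X : PowerSeries ℚ) ^ (m ⟨0, hn⟩) *
          ∏ j, (1 - (PowerSeries.X : PowerSeries ℚ) ^ (m j)) ^ (k j))
      = ∑ l : (∀ j : Fin n, Fin (k j + 1)),
          (∏ j, (-1 : ℚ) ^ ((l j : ℕ)) * ((k j).choose (l j) : ℚ)) *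
            (if N = m ⟨0, hn⟩ + ∑ j, m j * (l j : ℕ) then 1 else 0) := by
  have hexp : ∏ j, (1 - (PowerSeries.X : PowerSeries ℚ) ^ (m j)) ^ (k j)
      = ∑ l : (∀ j : Fin n, Fin (k j + 1)),
          ∏ j, (((-1 : PowerSeries ℚ) ^ ((l j : ℕ)) * ((k j).choose (l j) : PowerSeries ℚ))
            * PowerSeries.X ^ (m j * (l j : ℕ))) := by
    simp_rw [binom_expand]
    rw [Finset.prod_univ_sum]
    rw [Fintype.piFinset_univ]
  rw [hexp, Finset.mul_sum, map_sum]
  apply Finset.sum_congr rfl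
  intro l _
  have hprod : ∏ j, (((-1 : PowerSeries ℚ) ^ ((l j : ℕ)) * ((k j).choose (l j) : PowerSeries ℚ))
        * PowerSeries.X ^ (m j * (l j : ℕ)))
      = PowerSeries.C (∏ j, (-1 : ℚ) ^ ((l j : ℕ)) * ((k j).choose (l j) : ℚ))
          * PowerSeries.X ^ (∑ j, m j * (l j : ℕ)) := by
    rw [Finset.prod_mul_distrib, Finset.prod_pow_eq_pow_sum, map_prod]
    congr 1
    apply Finset.prod_congr rfl
    intro j _
    simp
  rw [hprod]
  have : (PowerSeries.X : PowerSeries ℚ) ^ (m ⟨0, hn⟩) *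
      (PowerSeries.C (∏ j, (-1 : ℚ) ^ ((l j : ℕ)) * ((k j).choose (l j) : ℚ))
        * PowerSeries.X ^ (∑ j, m j * (l j : ℕ)))
      = PowerSeries.C (∏ j, (-1 : ℚ) ^ ((l j : ℕ)) * ((k j).choose (l j) : ℚ))
        * PowerSeries.X ^ (m ⟨0, hn⟩ + ∑ j, m j * (l j : ℕ)) := by
    rw [pow_add]; ring
  rw [this, PowerSeries.coeff_C_mul, PowerSeries.coeff_X_pow]

lemma rhs_term (k : Fin n → ℕ) (l : ∀ j : Fin n, Fin (k j + 1)) :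
    (∏ j, (-1 : PowerSeries ℚ) ^ ((l j : ℕ) + 1) * ((k j).choose (l j) : PowerSeries ℚ)) *
      ∏ j, (-((PowerSeries.X : PowerSeries ℚ) ^ ((∑ i ∈ Finset.Iic j, (l i : ℕ)) + 1)) *
        (1 - (PowerSeries.X : PowerSeries ℚ) ^ ((∑ i ∈ Finset.Iic j, (l i : ℕ)) + 1))⁻¹)
    = PowerSeries.C (∏ j, (-1 : ℚ) ^ ((l j : ℕ)) * ((k j).choose (l j) : ℚ)) *
        ∏ j, H ((∑ i ∈ Finset.Iic j, (l i : ℕ)) + 1) := by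
  rw [← Finset.prod_mul_distrib]
  have : ∀ j : Fin n,
      ((-1 : PowerSeries ℚ) ^ ((l j : ℕ) + 1) * ((k j).choose (l j) : PowerSeries ℚ)) *
        (-((PowerSeries.X : PowerSeries ℚ) ^ ((∑ i ∈ Finset.Iic j, (l i : ℕ)) + 1)) *
          (1 - (PowerSeries.X : PowerSeries ℚ) ^ ((∑ i ∈ Finset.Iic j, (l i : ℕ)) + 1))⁻¹)
      = ((-1 : PowerSeries ℚ) ^ ((l j : ℕ)) * ((k j).choose (l j) : PowerSeries ℚ)) *
          H ((∑ i ∈ Finset.Iic j, (l i : ℕ)) + 1) := by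
    intro j
    rw [← geomH _ (Nat.succ_pos _)]
    set A := (PowerSeries.X : PowerSeries ℚ) ^ ((∑ i ∈ Finset.Iic j, (l i : ℕ)) + 1) with hA
    set B := (1 - A)⁻¹ with hB
    rw [pow_succ (-1 : PowerSeries ℚ) ((l j : ℕ))]
    ring
  rw [Finset.prod_congr rfl (fun j _ => this j), Finset.prod_mul_distrib]
  congr 1
  rw [map_prod]
  apply Finset.prod_congr rfl
  intro j _
  simp

/-- For `k₁,…,kₙ ∈ ℕ`, the identity in `ℚ[[q]]`
`∑_{m₁ > ⋯ > mₙ > 0} q^{m₁} ∏ⱼ (1−q^{mⱼ})^{kⱼ}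
  = ∑_{l₁=0}^{k₁} ⋯ ∑_{lₙ=0}^{kₙ} (∏ⱼ (−1)^{lⱼ+1} C(kⱼ,lⱼ)) · ∏ⱼ q^{Lⱼ}/(q^{Lⱼ}−1)`,
where `Lⱼ = l₁ + ⋯ + lⱼ + 1` and `q^L/(q^L−1) = −q^L·(1−q^L)⁻¹`. The left-hand
`q`-adically convergent sum is expressed coefficientwise: its coefficient of `q^N` is the
(finitely supported) sum of the `q^N`-coefficients of the summands. -/
theorem stmt_7 (n : ℕ) (hn : 1 ≤ n) (k : Fin n → ℕ) :
    (PowerSeries.mk fun N =>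
      ∑' m : {f : Fin n → ℕ // StrictAnti f ∧ ∀ i, 0 < f i},
        PowerSeries.coeff (R := ℚ) N
          ((PowerSeries.X : PowerSeries ℚ) ^ (m.1 ⟨0, hn⟩) *
            ∏ j, (1 - (PowerSeries.X : PowerSeries ℚ) ^ (m.1 j)) ^ (k j))) =
    ∑ l : (∀ j : Fin n, Fin (k j + 1)),
      (∏ j, (-1 : PowerSeries ℚ) ^ ((l j : ℕ) + 1) * ((k j).choose (l j) : PowerSeries ℚ)) *
        ∏ j,
          (-((PowerSeries.X : PowerSeries ℚ) ^ ((∑ i ∈ Finset.Iic j, (l i : ℕ)) + 1)) *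
            (1 - (PowerSeries.X : PowerSeries ℚ) ^
              ((∑ i ∈ Finset.Iic j, (l i : ℕ)) + 1))⁻¹) := by
  ext N
  rw [PowerSeries.coeff_mk, map_sum]
  rw [← Equiv.tsum_eq (decEquiv n)]
  have hsummand : ∀ c : Fin n → ℕ,
      PowerSeries.coeff N
          ((PowerSeries.X : PowerSeries ℚ) ^ (((decEquiv n) c).1 ⟨0, hn⟩) *
            ∏ j, (1 - (PowerSeries.X : PowerSeries ℚ) ^ (((decEquiv n) c).1 j)) ^ (k j))
      = ∑ l : (∀ j : Fin n, Fin (k j + 1)),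
          (∏ j, (-1 : ℚ) ^ ((l j : ℕ)) * ((k j).choose (l j) : ℚ)) *
            (if N = ∑ j, ((∑ i ∈ Finset.Iic j, (l i : ℕ)) + 1) * (c j + 1) then 1 else 0) := by
    intro c
    rw [show ((decEquiv n) c).1 = Psi c from rfl]
    rw [coeff_summand hn k N (Psi c)]
    apply Finset.sum_congr rfl
    intro l _
    rw [exponent_eq hn c (fun j => (l j : ℕ))]
  have hsum : ∀ l : (∀ j : Fin n, Fin (k j + 1)),
      Summable (fun c : Fin n → ℕ =>
        (∏ j, (-1 : ℚ) ^ ((l j : ℕ)) * ((k j).choose (l j) : ℚ)) *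
          (if N = ∑ j, ((∑ i ∈ Finset.Iic j, (l i : ℕ)) + 1) * (c j + 1) then 1 else 0)) := by
    intro l
    apply summable_of_ne_finset_zero
      (s := Fintype.piFinset (fun _ : Fin n => Finset.range (N + 1)))
    intro c hc
    rw [ind_zero (fun j => (∑ i ∈ Finset.Iic j, (l i : ℕ)) + 1)
      (fun j => Nat.succ_pos _) N c hc, mul_zero]
  rw [tsum_congr hsummand, Summable.tsum_finsetSum (fun l _ => hsum l)]
  apply Finset.sum_congr rfl
  intro l _
  rw [rhs_term, PowerSeries.coeff_C_mul]
  rw [coeff_prod_H (fun j => (∑ i ∈ Finset.Iic j, (l i : ℕ)) + 1) (fun j => Nat.succ_pos _) N]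
  rw [tsum_mul_left]
end

section
/- For every n ≥ 1, all k₁,…,kₙ ∈ ℕ₀, and every z ∈ ℂ with Re z < 0, the family (m₁,…,mₙ) ↦ m₁^{k₁}⋯mₙ^{kₙ}·e^{m₁ z} indexed by strictly decreasing n-tuples of positive integers m₁ > ⋯ > mₙ > 0 is summable, and its sum equals F_{(k₁,…,kₙ)}(z), where the functions F are defined on {z ∈ ℂ : Re z < 0} by F_{(kₙ)} := the kₙ-th iterated derivative of x, and F_{(k_j,…,kₙ)} := the k_j-th iterated derivative of the function z ↦ x(z)·F_{(k_{j+1},…,kₙ)}(z). In other words, the t-regularized multiple polylogarithm at non-positive arguments satisfies Li_{−k₁,…,−kₙ}(e^z) = ∂_z^{k₁}[x·∂_z^{k₂}[x ⋯ ∂_z^{kₙ}[x]]⋯](z). -/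
set_option maxHeartbeats 1000000

open Complex

/-- The function `x(z) = e^z/(1 - e^z)`. -/
noncomputable def xFun (z : ℂ) : ℂ := Complex.exp z / (1 - Complex.exp z)

/-- `F (k₁ :: … :: kₙ) = ∂^{k₁}[x·∂^{k₂}[x ⋯ ∂^{kₙ}[x]]⋯]`, defined by
`F [] = 1` and `F (k :: ks) = ∂^k (x · F ks)`. -/
noncomputable def F : List ℕ → ℂ → ℂ
  | [] => fun _ => 1
  | k :: ks => iteratedDeriv k fun z => xFun z * F ks z

open Finset

namespace Stmt16Aux

abbrev Dec (n : ℕ) := {f : Fin n → ℕ // StrictAnti f ∧ ∀ i, 0 < f i}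

def hdD {n : ℕ} (f : Fin n → ℕ) : ℕ := if h : 0 < n then f ⟨0, h⟩ else 0

lemma hd_eq {n : ℕ} (f : Fin (n + 1) → ℕ) : hdD f = f 0 := by
  rw [hdD, dif_pos (Nat.succ_pos n)]
  simp

lemma hd_le {n : ℕ} {f : Fin n → ℕ} (hf : StrictAnti f) (i : Fin n) : f i ≤ hdD f := by
  rw [hdD, dif_pos i.pos]
  exact hf.antitone (by simp [Fin.le_def])

lemma cons_mem {n : ℕ} {a : ℕ} {t : Fin n → ℕ} (ht : StrictAnti t) (htpos : ∀ i, 0 < t i)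
    (ha : hdD t < a) :
    StrictAnti (Fin.cons a t : Fin (n + 1) → ℕ) ∧ ∀ i, 0 < (Fin.cons a t : Fin (n + 1) → ℕ) i := by
  constructor
  · intro i j hij
    induction j using Fin.cases with
    | zero => exact absurd hij (Fin.not_lt_zero i).elim
    | succ j' =>
      induction i using Fin.cases with
      | zero =>
        simp only [Fin.cons_zero, Fin.cons_succ]
        exact lt_of_le_of_lt (hd_le ht j') ha
      | succ i' =>
        simp only [Fin.cons_succ]
        exact ht (Fin.succ_lt_succ_iff.mp hij)
  · intro i
    induction i using Fin.cases with
    | zero => simpa using Nat.lt_of_le_of_lt (Nat.zero_le _) ha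
    | succ i' => simpa using htpos i'

def consMap (n : ℕ) (p : ℕ × Dec n) : Dec (n + 1) :=
  ⟨Fin.cons (hdD p.2.1 + p.1 + 1) p.2.1,
    cons_mem p.2.2.1 p.2.2.2 (by omega)⟩

lemma consMap_bij (n : ℕ) : Function.Bijective (consMap n) := by
  constructor
  · rintro ⟨j, t⟩ ⟨j', t'⟩ h
    have h2 : (Fin.cons (hdD t.1 + j + 1) t.1 : Fin (n+1) → ℕ)
        = Fin.cons (hdD t'.1 + j' + 1) t'.1 := congrArg Subtype.val h
    have ht : t.1 = t'.1 := funext fun i => by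
      have := congrFun h2 i.succ; simpa using this
    have h0 : hdD t.1 + j + 1 = hdD t'.1 + j' + 1 := by
      have := congrFun h2 0; simpa using this
    rw [ht] at h0
    have hj : j = j' := by omega
    exact Prod.ext hj (Subtype.ext ht)
  · rintro ⟨f, hf, hfpos⟩
    have htail : StrictAnti (Fin.tail f) := fun i j hij => hf (Fin.succ_lt_succ_iff.mpr hij)
    have htpos : ∀ i, 0 < Fin.tail f i := fun i => hfpos _
    have hlt : hdD (Fin.tail f) < f 0 := by
      rw [hdD]; split
      · exact hf (Fin.succ_pos _)
      · exact hfpos 0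
    refine ⟨(f 0 - hdD (Fin.tail f) - 1, ⟨Fin.tail f, htail, htpos⟩), ?_⟩
    apply Subtype.ext
    show Fin.cons (hdD (Fin.tail f) + (f 0 - hdD (Fin.tail f) - 1) + 1) (Fin.tail f) = f
    have : hdD (Fin.tail f) + (f 0 - hdD (Fin.tail f) - 1) + 1 = f 0 := by omega
    rw [this, Fin.cons_self_tail]

noncomputable def decEquiv (n : ℕ) : ℕ × Dec n ≃ Dec (n + 1) :=
  Equiv.ofBijective _ (consMap_bij n)

end Stmt16Aux

namespace Stmt16Aux

lemma aux_poly_geom (M : ℕ) (a : ℝ) {r : ℝ} (h0 : 0 ≤ r) (h1 : r < 1) :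
    Summable fun j : ℕ => ((j : ℝ) + a) ^ M * r ^ j := by
  have hr : ‖r‖ < 1 := by rwa [Real.norm_eq_abs, _root_.abs_of_nonneg h0]
  have key : ∀ j : ℕ, ((j : ℝ) + a) ^ M * r ^ j =
      ∑ i ∈ Finset.range (M + 1), (a ^ (M - i) * (M.choose i)) * ((j : ℝ) ^ i * r ^ j) := by
    intro j
    rw [add_pow, Finset.sum_mul]
    exact Finset.sum_congr rfl fun i _ => by ring
  rw [summable_congr key]
  exact summable_sum fun i _ =>
    (summable_pow_mul_geometric_of_norm_lt_one i hr).mul_left _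

lemma auxSummable : ∀ (n K : ℕ) (c : Fin n → ℕ) {r : ℝ}, 0 ≤ r → r < 1 →
    Summable (fun m : Dec n =>
      ((hdD m.1 + 1 : ℕ) : ℝ) ^ K * (∏ i, (m.1 i : ℝ) ^ (c i)) * r ^ (hdD m.1)) := by
  intro n
  induction n with
  | zero =>
    intro K c r h0 h1
    classical
    have hall : ∀ m : Dec 0, m = ⟨Fin.elim0, fun i => i.elim0, fun i => i.elim0⟩ :=
      fun m => Subtype.ext (funext fun i => i.elim0)
    haveI : Subsingleton (Dec 0) := ⟨fun a b => (hall a).trans (hall b).symm⟩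
    have hval : ∀ m : Dec 0,
        ((hdD m.1 + 1 : ℕ) : ℝ) ^ K * (∏ i, (m.1 i : ℝ) ^ (c i)) * r ^ (hdD m.1) = 1 := by
      intro m; simp [hdD]
    apply Summable.congr
      ((hasSum_ite_eq (⟨Fin.elim0, fun i => i.elim0, fun i => i.elim0⟩ : Dec 0) (1 : ℝ)).summable)
    intro m
    rw [if_pos (Subsingleton.elim m _)]
    exact (hval m).symm
  | succ n ih =>
    intro K c r h0 h1
    rw [← (decEquiv n).summable_iff]
    set A : ℕ → ℝ := fun j => ((j : ℝ) + 2) ^ (K + c 0) * r ^ j with hA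
    set B : Dec n → ℝ := fun t =>
      ((hdD t.1 + 1 : ℕ) : ℝ) ^ (K + c 0) * (∏ i, (t.1 i : ℝ) ^ (c i.succ)) * r ^ (hdD t.1) with hB
    have hAs : Summable A := aux_poly_geom _ 2 h0 h1
    have hBs : Summable B := ih (K + c 0) (fun i => c i.succ) h0 h1
    have hAnn : ∀ j, 0 ≤ A j := fun j => by positivity
    have hBnn : ∀ t, 0 ≤ B t := fun t =>
      mul_nonneg (mul_nonneg (by positivity) (Finset.prod_nonneg fun i _ => by positivity))
        (by positivity)
    have hprod : Summable fun p : ℕ × Dec n => A p.1 * B p.2 :=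
      hAs.mul_of_nonneg hBs hAnn hBnn
    apply Summable.of_nonneg_of_le _ _ hprod
    · intro p
      exact mul_nonneg (mul_nonneg (by positivity)
        (Finset.prod_nonneg fun i _ => by positivity)) (by positivity)
    · rintro ⟨j, t⟩
      show ((hdD (consMap n (j, t)).1 + 1 : ℕ) : ℝ) ^ K *
          (∏ i, ((consMap n (j, t)).1 i : ℝ) ^ (c i)) * r ^ (hdD (consMap n (j, t)).1) ≤ _
      have hc0 : (consMap n (j, t)).1 = Fin.cons (hdD t.1 + j + 1) t.1 := rfl
      rw [hc0, hd_eq, Fin.cons_zero, Fin.prod_univ_succ]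
      simp only [Fin.cons_zero, Fin.cons_succ]
      set h := hdD t.1 with hh
      set P : ℝ := ∏ i, (t.1 i : ℝ) ^ (c i.succ) with hP
      have hPnn : 0 ≤ P := Finset.prod_nonneg fun i _ => by positivity
      push_cast
      have e1 : ((h : ℝ) + j + 1 + 1) ^ K * ((h : ℝ) + j + 1) ^ (c 0) ≤
          (((h : ℝ) + 1) * ((j : ℝ) + 2)) ^ (K + c 0) := by
        rw [pow_add]
        have b1 : ((h : ℝ) + j + 1 + 1) ≤ ((h : ℝ) + 1) * ((j : ℝ) + 2) := by nlinarith [Nat.cast_nonneg (α := ℝ) h, Nat.cast_nonneg (α := ℝ) j]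
        have b2 : ((h : ℝ) + j + 1) ≤ ((h : ℝ) + 1) * ((j : ℝ) + 2) := by nlinarith [Nat.cast_nonneg (α := ℝ) h, Nat.cast_nonneg (α := ℝ) j]
        exact mul_le_mul (pow_le_pow_left₀ (by positivity) b1 K)
          (pow_le_pow_left₀ (by positivity) b2 (c 0)) (by positivity) (by positivity)
      have e2 : r ^ (h + j + 1) ≤ r ^ h * r ^ j := by
        rw [← pow_add]
        exact pow_le_pow_of_le_one h0 h1.le (by omega)
      calc ((h : ℝ) + j + 1 + 1) ^ K * (((h : ℝ) + j + 1) ^ (c 0) * P) * r ^ (h + j + 1)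
          ≤ ((((h : ℝ) + 1) * ((j : ℝ) + 2)) ^ (K + c 0) * P) * (r ^ h * r ^ j) := by
            apply mul_le_mul _ e2 (by positivity)
              (mul_nonneg (by positivity) hPnn)
            rw [← mul_assoc]
            exact mul_le_mul_of_nonneg_right e1 hPnn
        _ = A j * B t := by
            rw [hA, hB, mul_pow]
            push_cast
            ring

end Stmt16Aux

namespace Stmt16Aux

lemma step (n : ℕ) (c : Fin (n + 1) → ℕ) (G : ℂ → ℂ)
    (H : ∀ w : ℂ, w.re < 0 → HasSum (fun m : Dec (n + 1) =>
      (∏ i, (m.1 i : ℂ) ^ (c i)) * Complex.exp ((m.1 0 : ℕ) * w)) (G w))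
    (z : ℂ) (hz : z.re < 0) :
    HasSum (fun m : Dec (n + 1) =>
      (m.1 0 : ℂ) * ((∏ i, (m.1 i : ℂ) ^ (c i)) * Complex.exp ((m.1 0 : ℕ) * z)))
      (deriv G z) := by
  set R : ℝ := -z.re / 2 with hR
  have hR0 : 0 < R := by rw [hR]; linarith
  have htO : IsOpen (Metric.ball z R) := Metric.isOpen_ball
  have htC : IsPreconnected (Metric.ball z R) := (convex_ball z R).isPreconnected
  have hmem : ∀ w ∈ Metric.ball z R, w.re < z.re / 2 := by
    intro w hw
    have h1 : |(w - z).re| ≤ ‖w - z‖ := Complex.abs_re_le_norm _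
    have h2 : ‖w - z‖ < R := by rwa [Metric.mem_ball, Complex.dist_eq] at hw
    have h3 : (w - z).re ≤ |(w - z).re| := le_abs_self _
    have h4 : (w - z).re = w.re - z.re := Complex.sub_re w z
    rw [hR] at h2
    linarith
  have hmem0 : ∀ w ∈ Metric.ball z R, w.re < 0 := fun w hw => by
    have := hmem w hw; linarith
  set r : ℝ := Real.exp (z.re / 2) with hr
  have hr0 : 0 ≤ r := (Real.exp_pos _).le
  have hr1 : r < 1 := Real.exp_lt_one_iff.mpr (by linarith)
  set g : Dec (n + 1) → ℂ → ℂ := fun m w =>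
    (∏ i, (m.1 i : ℂ) ^ (c i)) * Complex.exp ((m.1 0 : ℕ) * w) with hg_def
  set g' : Dec (n + 1) → ℂ → ℂ := fun m w =>
    (m.1 0 : ℂ) * ((∏ i, (m.1 i : ℂ) ^ (c i)) * Complex.exp ((m.1 0 : ℕ) * w)) with hg'_def
  set u : Dec (n + 1) → ℝ := fun m =>
    ((hdD m.1 + 1 : ℕ) : ℝ) ^ 1 * (∏ i, (m.1 i : ℝ) ^ (c i)) * r ^ (hdD m.1) with hu_def
  have hu : Summable u := auxSummable (n + 1) 1 c hr0 hr1
  have hg : ∀ (m : Dec (n + 1)) (w : ℂ), HasDerivAt (g m) (g' m w) w := by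
    intro m w
    have h1 : HasDerivAt (fun w : ℂ => ((m.1 0 : ℕ) : ℂ) * w) ((m.1 0 : ℕ) : ℂ) w := by
      simpa using (hasDerivAt_id w).const_mul ((m.1 0 : ℕ) : ℂ)
    have h2 := h1.cexp
    have h3 := h2.const_mul (∏ i, (m.1 i : ℂ) ^ (c i))
    exact h3.congr_deriv (by rw [hg'_def]; ring)
  have hnorm : ∀ (m : Dec (n + 1)) (w : ℂ), w ∈ Metric.ball z R → ‖g' m w‖ ≤ u m := by
    intro m w hw
    have hP : ‖∏ i, (m.1 i : ℂ) ^ (c i)‖ = ∏ i, (m.1 i : ℝ) ^ (c i) := by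
      rw [norm_prod]
      exact Finset.prod_congr rfl fun i _ => by
        rw [norm_pow, Complex.norm_natCast]
    have hE : ‖Complex.exp ((m.1 0 : ℕ) * w)‖ = Real.exp ((m.1 0 : ℕ) * w.re) := by
      rw [Complex.norm_exp]
      congr 1
      simp [Complex.mul_re]
    have hEb : Real.exp ((m.1 0 : ℕ) * w.re) ≤ r ^ (m.1 0) := by
      rw [hr, ← Real.exp_nat_mul]
      exact Real.exp_le_exp.mpr (by
        have := (hmem w hw).le
        have h0 : (0 : ℝ) ≤ (m.1 0 : ℕ) := Nat.cast_nonneg _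
        nlinarith)
    have hPnn : (0:ℝ) ≤ ∏ i, (m.1 i : ℝ) ^ (c i) := Finset.prod_nonneg fun i _ => by positivity
    calc ‖g' m w‖ = (m.1 0 : ℝ) * ((∏ i, (m.1 i : ℝ) ^ (c i)) * Real.exp ((m.1 0 : ℕ) * w.re)) := by
          rw [hg'_def]
          simp only [norm_mul, Complex.norm_natCast, hP, hE]
      _ ≤ ((m.1 0 : ℝ) + 1) * ((∏ i, (m.1 i : ℝ) ^ (c i)) * r ^ (m.1 0)) := by
          apply mul_le_mul (by linarith) (mul_le_mul_of_nonneg_left hEb hPnn)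
            (mul_nonneg hPnn (Real.exp_nonneg _)) (by positivity)
      _ = u m := by
          show _ = ((hdD m.1 + 1 : ℕ) : ℝ) ^ 1 * (∏ i, (m.1 i : ℝ) ^ (c i)) * r ^ (hdD m.1)
          rw [hd_eq m.1]
          push_cast
          ring
  have hzt : z ∈ Metric.ball z R := Metric.mem_ball_self hR0
  have key := hasDerivAt_tsum_of_isPreconnected hu htO htC
    (fun m w _ => hg m w) hnorm hzt (H z hz).summable hzt
  have hsum' : Summable fun m => g' m z :=
    Summable.of_norm_bounded hu fun m => hnorm m z hzt
  have hderiv : deriv G z = ∑' m, g' m z := by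
    have h2 : G =ᶠ[nhds z] fun w => ∑' m, g m w := by
      have hopen : IsOpen {w : ℂ | w.re < 0} := isOpen_lt Complex.continuous_re continuous_const
      filter_upwards [hopen.mem_nhds hz] with w hw
      exact ((H w hw).tsum_eq).symm
    rw [h2.deriv_eq, key.deriv]
  rw [show (fun m : Dec (n + 1) =>
      (m.1 0 : ℂ) * ((∏ i, (m.1 i : ℂ) ^ (c i)) * Complex.exp ((m.1 0 : ℕ) * z))) = fun m => g' m z
    from rfl, hderiv]
  exact hsum'.hasSum

end Stmt16Aux

namespace Stmt16Aux

lemma mainAll : ∀ (n : ℕ) (c : Fin n → ℕ) (z : ℂ), z.re < 0 →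
    HasSum (fun m : Dec n => (∏ i, (m.1 i : ℂ) ^ (c i)) * Complex.exp ((hdD m.1 : ℕ) * z))
      (F (List.ofFn c) z) := by
  intro n
  induction n with
  | zero =>
    intro c z hz
    classical
    have hall : ∀ m : Dec 0, m = ⟨Fin.elim0, fun i => i.elim0, fun i => i.elim0⟩ :=
      fun m => Subtype.ext (funext fun i => i.elim0)
    haveI : Subsingleton (Dec 0) := ⟨fun a b => (hall a).trans (hall b).symm⟩
    have hF : F (List.ofFn c) z = 1 := by
      rw [List.ofFn_zero]; rfl
    rw [hF]
    apply HasSum.congr_fun (hasSum_ite_eq (⟨Fin.elim0, fun i => i.elim0, fun i => i.elim0⟩ : Dec 0) (1 : ℂ))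
    intro m
    rw [if_pos (Subsingleton.elim m _)]
    simp [hdD]
  | succ n ih =>
    suffices Hj : ∀ (j : ℕ) (ct : Fin n → ℕ) (z : ℂ), z.re < 0 →
        HasSum (fun m : Dec (n + 1) =>
          (∏ i, (m.1 i : ℂ) ^ (Fin.cons j ct i)) * Complex.exp ((m.1 0 : ℕ) * z))
          (F (j :: List.ofFn ct) z) by
      intro c z hz
      have h1 := Hj (c 0) (Fin.tail c) z hz
      rw [List.ofFn_succ]
      have h2 : (fun m : Dec (n + 1) =>
          (∏ i, (m.1 i : ℂ) ^ (Fin.cons (c 0) (Fin.tail c) i)) * Complex.exp ((m.1 0 : ℕ) * z))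
          = fun m : Dec (n + 1) =>
          (∏ i, (m.1 i : ℂ) ^ (c i)) * Complex.exp ((hdD m.1 : ℕ) * z) := by
        funext m
        rw [Fin.cons_self_tail, hd_eq]
      rw [h2] at h1
      exact h1
    intro j ct
    induction j with
    | zero =>
      intro z hz
      have hexp : ‖Complex.exp z‖ < 1 := by
        rw [Complex.norm_exp]
        exact Real.exp_lt_one_iff.mpr hz
      have hA : HasSum (fun j : ℕ => Complex.exp (((j : ℕ) + 1 : ℕ) * z)) (xFun z) := by
        have h0 := hasSum_geometric_of_norm_lt_one hexp
        have h1 := h0.mul_left (Complex.exp z)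
        have : (fun j : ℕ => Complex.exp z * Complex.exp z ^ j)
            = fun j : ℕ => Complex.exp (((j : ℕ) + 1 : ℕ) * z) := by
          funext j
          rw [← Complex.exp_nat_mul, ← Complex.exp_add]
          congr 1
          push_cast
          ring
        rw [this] at h1
        rw [xFun, div_eq_mul_inv]
        exact h1
      have hB := ih ct z hz
      have hsA : Summable fun j : ℕ => ‖Complex.exp (((j : ℕ) + 1 : ℕ) * z)‖ := by
        have : (fun j : ℕ => ‖Complex.exp (((j : ℕ) + 1 : ℕ) * z)‖)
            = fun j : ℕ => ‖Complex.exp z‖ * ‖Complex.exp z‖ ^ j := by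
          funext j
          rw [← norm_pow, ← norm_mul]
          congr 1
          rw [← Complex.exp_nat_mul, ← Complex.exp_add]
          congr 1
          push_cast
          ring
        rw [this]
        exact (summable_geometric_of_lt_one (norm_nonneg _) hexp).mul_left _
      have hsB : Summable fun t : Dec n =>
          ‖(∏ i, (t.1 i : ℂ) ^ (ct i)) * Complex.exp ((hdD t.1 : ℕ) * z)‖ := by
        apply Summable.congr (auxSummable n 0 ct (Real.exp_pos z.re).le
          (Real.exp_lt_one_iff.mpr hz))
        intro t
        rw [norm_mul, norm_prod]
        have h1 : ∀ i, ‖(t.1 i : ℂ) ^ (ct i)‖ = (t.1 i : ℝ) ^ (ct i) := fun i => by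
          rw [norm_pow, Complex.norm_natCast]
        have h2 : ‖Complex.exp ((hdD t.1 : ℕ) * z)‖ = Real.exp z.re ^ (hdD t.1) := by
          rw [Complex.norm_exp, ← Real.exp_nat_mul]
          congr 1
          simp [Complex.mul_re]
        rw [h2]
        simp only [h1, pow_zero, one_mul]
      have hs := summable_mul_of_summable_norm hsA hsB
      have hprod := hA.mul hB hs
      have heq : (fun p : ℕ × Dec n => Complex.exp (((p.1 : ℕ) + 1 : ℕ) * z) *
            ((∏ i, (p.2.1 i : ℂ) ^ (ct i)) * Complex.exp ((hdD p.2.1 : ℕ) * z)))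
          = (fun m : Dec (n + 1) =>
            (∏ i, (m.1 i : ℂ) ^ (Fin.cons 0 ct i)) * Complex.exp ((m.1 0 : ℕ) * z))
            ∘ (decEquiv n) := by
        funext p
        show _ = (∏ i, (((consMap n p).1 i : ℕ) : ℂ) ^ (Fin.cons 0 ct i)) *
          Complex.exp (((consMap n p).1 0 : ℕ) * z)
        have hc : (consMap n p).1 = Fin.cons (hdD p.2.1 + p.1 + 1) p.2.1 := rfl
        rw [hc, Fin.prod_univ_succ]
        simp only [Fin.cons_zero, Fin.cons_succ, pow_zero, one_mul]
        rw [show ((hdD p.2.1 + p.1 + 1 : ℕ) : ℂ) * z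
            = ((p.1 + 1 : ℕ) : ℂ) * z + ((hdD p.2.1 : ℕ) : ℂ) * z by push_cast; ring,
          Complex.exp_add]
        ring
      have hfinal : F (0 :: List.ofFn ct) z = xFun z * F (List.ofFn ct) z := by
        show iteratedDeriv 0 (fun w => xFun w * F (List.ofFn ct) w) z = _
        rw [iteratedDeriv_zero]
      rw [hfinal]
      rw [heq] at hprod
      exact ((decEquiv n).hasSum_iff).mp hprod
    | succ j ihj =>
      intro z hz
      have hFd : F ((j + 1) :: List.ofFn ct) = deriv (F (j :: List.ofFn ct)) := by
        show iteratedDeriv (j + 1) (fun w => xFun w * F (List.ofFn ct) w) = _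
        rw [iteratedDeriv_succ]
        rfl
      have key := step n (Fin.cons j ct) (F (j :: List.ofFn ct)) (fun w hw => ihj w hw) z hz
      have hfun : (fun m : Dec (n + 1) =>
          (∏ i, (m.1 i : ℂ) ^ (Fin.cons (j + 1) ct i)) * Complex.exp ((m.1 0 : ℕ) * z))
          = fun m : Dec (n + 1) =>
            (m.1 0 : ℂ) * ((∏ i, (m.1 i : ℂ) ^ (Fin.cons j ct i)) * Complex.exp ((m.1 0 : ℕ) * z)) := by
        funext m
        rw [Fin.prod_univ_succ, Fin.prod_univ_succ]
        simp only [Fin.cons_zero, Fin.cons_succ, pow_succ]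
        ring
      rw [hfun, hFd]
      exact key

end Stmt16Aux

open Stmt16Aux in
/-- For `k₁,…,kₙ ∈ ℕ₀` and `Re z < 0`, the family
`(m₁,…,mₙ) ↦ m₁^{k₁}⋯mₙ^{kₙ}·e^{m₁ z}` over strictly decreasing `n`-tuples of positive
integers is summable with sum `∂_z^{k₁}[x·∂_z^{k₂}[x ⋯ ∂_z^{kₙ}[x]]⋯](z)`, i.e.
`Li_{-k₁,…,-kₙ}(e^z) = ∂_z^{k₁}[x·∂_z^{k₂}[x ⋯ ∂_z^{kₙ}[x]]⋯](z)`. -/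
theorem stmt_16 (n : ℕ) (hn : 1 ≤ n) (k : Fin n → ℕ) (z : ℂ) (hz : z.re < 0) :
    HasSum (fun m : {f : Fin n → ℕ // StrictAnti f ∧ ∀ i, 0 < f i} =>
      (∏ i, (m.1 i : ℂ) ^ (k i)) * Complex.exp ((m.1 ⟨0, hn⟩ : ℕ) * z))
      (F (List.ofFn k) z) := by
  cases n with
  | zero => omega
  | succ n' =>
    have h := mainAll (n' + 1) k z hz
    have heq : (fun m : Dec (n' + 1) =>
        (∏ i, (m.1 i : ℂ) ^ (k i)) * Complex.exp ((hdD m.1 : ℕ) * z))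
        = fun m : Dec (n' + 1) =>
        (∏ i, (m.1 i : ℂ) ^ (k i)) * Complex.exp ((m.1 ⟨0, hn⟩ : ℕ) * z) := by
      funext m
      rw [hd_eq, show (⟨0, hn⟩ : Fin (n' + 1)) = 0 from by ext; simp]
    rw [heq] at h
    exact h
end

section
/- For all a, b ∈ ℕ₀ with a + b odd: ∑_{m=0}^{a} (a! / ((a−m)!·(m+1)!)) · B'_{m+1} · B'_{a−m+b+1}/(a−m+b+1) = (1/2)·(1 + [b = 0]) · B'_{a+b+1}/(a+b+1), where [b = 0] equals 1 if b = 0 and 0 otherwise. (This identity expresses that the constant term of the Laurent expansion at 0 of ∂_z^a(x(z)·∂_z^b x(z)), with x(z) = e^z/(1−e^z), equals the value ζ₂(−a,−b) = (1/2)(1+δ₀(b))·B_{a+b+1}/(a+b+1) of the meromorphic continuation of the double zeta function.) -/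
/-- For `a + b` odd, the Bernoulli-number identity
`∑_{m=0}^{a} (a!/((a−m)!·(m+1)!))·B'_{m+1}·B'_{a−m+b+1}/(a−m+b+1)
  = (1/2)·(1 + [b = 0])·B'_{a+b+1}/(a+b+1)`,
expressing that the constant term of the Laurent expansion at `0` of
`∂_z^a(x(z)·∂_z^b x(z))`, `x(z) = e^z/(1−e^z)`, equals `ζ₂(−a,−b)`. -/
theorem stmt_17 (a b : ℕ) (h : Odd (a + b)) :
    ∑ m ∈ Finset.range (a + 1),
      ((a.factorial : ℚ) / ((a - m).factorial * (m + 1).factorial)) *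
        bernoulli' (m + 1) * (bernoulli' (a - m + b + 1) / (a - m + b + 1)) =
    (1 / 2) * (1 + if b = 0 then 1 else 0) * (bernoulli' (a + b + 1) / (a + b + 1)) := by
  have key : ∀ m ∈ Finset.range (a + 1), m ≠ 0 → (0 < b ∨ m ≠ a) →
      ((a.factorial : ℚ) / ((a - m).factorial * (m + 1).factorial)) *
        bernoulli' (m + 1) * (bernoulli' (a - m + b + 1) / (a - m + b + 1)) = 0 := by
    intro m hm hm0 hcond
    have hle : m ≤ a := Nat.lt_succ_iff.mp (Finset.mem_range.mp hm)
    rcases Nat.even_or_odd m with he | ho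
    · have hz : bernoulli' (m + 1) = 0 :=
        bernoulli'_eq_zero_of_odd he.add_one (by omega)
      simp [hz]
    · have hev : Even (a + b - m) := Nat.Odd.sub_odd h ho
      have heq : a - m + b = a + b - m := by omega
      have h1 : 1 < a - m + b + 1 := by rcases hcond with hb | hma <;> omega
      have hz : bernoulli' (a - m + b + 1) = 0 := by
        apply bernoulli'_eq_zero_of_odd _ h1
        rw [heq]; exact hev.add_one
      simp [hz]
  rcases Nat.eq_zero_or_pos b with hb | hb
  · subst hb
    have ha : Odd a := by simpa using h
    have ha1 : 1 ≤ a := by rcases ha with ⟨k, hk⟩; omega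
    have hsub : ({0, a} : Finset ℕ) ⊆ Finset.range (a + 1) := by
      intro x hx; simp at hx; rcases hx with rfl | rfl <;> simp [Nat.lt_succ_iff]
    rw [← Finset.sum_subset hsub (by
      intro m hm hnot
      simp only [Finset.mem_insert, Finset.mem_singleton, not_or] at hnot
      exact key m hm hnot.1 (Or.inr hnot.2))]
    rw [Finset.sum_pair (show (0 : ℕ) ≠ a by omega)]
    simp only [Nat.sub_zero, Nat.sub_self, Nat.add_zero, Nat.factorial_zero,
      Nat.factorial_one, zero_add, bernoulli'_one, if_pos rfl]
    have hfac : ((a + 1).factorial : ℚ) = (a + 1) * a.factorial := by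
      rw [Nat.factorial_succ]; push_cast; ring
    have h0 : (a.factorial : ℚ) ≠ 0 := Nat.cast_ne_zero.mpr a.factorial_ne_zero
    have h1 : ((a : ℚ) + 1) ≠ 0 := by positivity
    rw [hfac]
    push_cast
    field_simp
    ring
  · rw [Finset.sum_eq_single 0]
    · have h0 : (a.factorial : ℚ) ≠ 0 := Nat.cast_ne_zero.mpr a.factorial_ne_zero
      simp [bernoulli'_one, if_neg (by omega : ¬ b = 0), h0]
    · intro m hm hne; exact key m hm hne (Or.inl hb)
    · intro h0; exact absurd (Finset.mem_range.mpr (by omega)) h0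
end
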